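/- arXiv:2206.03172 — 3 statements merged into one kernel-verified Lean document; each statement's English description precedes it below -/
import Mathlib

section
/- Let T1 = (Ty1, ≤1), T2 = (Ty2, ≤2) and T3 = (Ty3, ≤3) be pairwise compatible type systems. Then T1 ∪ T2 is compatible with T3; that is, (≤1 ∪ ≤2) ∪ ≤3 is a partial order on Ty1 ∪ Ty2 ∪ Ty3, so ((Ty1 ∪ Ty2) ∪ Ty3, (≤1 ∪ ≤2) ∪ ≤3) is a type system. -/
namespace RST

/-! ## Type systems -/

/-- A relation (given as a set of pairs) is a partial order on the set `Ty`. -/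
def IsPartialOrderOn {U : Type*} (Ty : Set U) (le : Set (U × U)) : Prop :=
  (∀ p ∈ le, p.1 ∈ Ty ∧ p.2 ∈ Ty) ∧
  (∀ τ ∈ Ty, (τ, τ) ∈ le) ∧
  (∀ a b : U, (a, b) ∈ le → (b, a) ∈ le → a = b) ∧
  (∀ a b c : U, (a, b) ∈ le → (b, c) ∈ le → (a, c) ∈ le)

/-- The subtype closure of `Ty'` in the type system `(Ty, le)`. -/
def subtypeClosure {U : Type*} (Ty : Set U) (le : Set (U × U)) (Ty' : Set U) : Set U :=
  {τ | τ ∈ Ty ∧ ∃ τ' ∈ Ty', (τ, τ') ∈ le}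

/-- The set of all subtype closures of subsets of `Ty`. -/
def SC {U : Type*} (Ty : Set U) (le : Set (U × U)) : Set (Set U) :=
  {S | ∃ Ty' ⊆ Ty, S = subtypeClosure Ty le Ty'}

/-- The candidate order of an upper bound extension: the reflexive closure (on `Ty ∪ Tystar`)
of `le` together with the pairs `(τ, f S)` for `τ ∈ S ∈ SC Ty le`. -/
def upperBoundRel {U : Type*} (Ty Tystar : Set U) (le : Set (U × U)) (f : Set U → U) :
    Set (U × U) :=
  (le ∪ {p : U × U | ∃ S ∈ SC Ty le, p.1 ∈ S ∧ p.2 = f S}) ∪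
    {p : U × U | p.1 = p.2 ∧ p.1 ∈ Ty ∪ Tystar}

/-! ## Graphs -/

/-- A (raw) directed labelled bipartite graph: tokens `Tk`, configurators `Cf`, arrows `Arr`,
incidence, arrow indices and vertex labels all given relationally (as sets of pairs), so that
unions of graphs are componentwise unions. -/
structure PreGraph (V A L : Type*) where
  Tk : Set V
  Cf : Set V
  Arr : Set A
  inc : Set (A × (V × V))
  ia : Set (A × ℕ)
  tl : Set (V × L)
  cl : Set (V × L)

variable {V A L : Type*}

instance : Union (PreGraph V A L) :=
  ⟨fun g h =>
    ⟨g.Tk ∪ h.Tk, g.Cf ∪ h.Cf, g.Arr ∪ h.Arr, g.inc ∪ h.inc, g.ia ∪ h.ia,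
      g.tl ∪ h.tl, g.cl ∪ h.cl⟩⟩

def PreGraph.Subgraph (h g : PreGraph V A L) : Prop :=
  h.Tk ⊆ g.Tk ∧ h.Cf ⊆ g.Cf ∧ h.Arr ⊆ g.Arr ∧ h.inc ⊆ g.inc ∧ h.ia ⊆ g.ia ∧
    h.tl ⊆ g.tl ∧ h.cl ⊆ g.cl

/-- The vertices adjacent to `u` (together with `u`). -/
def PreGraph.adjTo (g : PreGraph V A L) (u : V) : Set V :=
  {u} ∪ {v | ∃ a ∈ g.Arr, (a, (v, u)) ∈ g.inc ∨ (a, (u, v)) ∈ g.inc}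

/-- The arrows incident to `u`. -/
def PreGraph.incidentArrows (g : PreGraph V A L) (u : V) : Set A :=
  {a | a ∈ g.Arr ∧ ∃ v, (a, (v, u)) ∈ g.inc ∨ (a, (u, v)) ∈ g.inc}

/-- The restriction of a graph to given vertex and arrow sets. -/
def PreGraph.restrict (g : PreGraph V A L) (Vs : Set V) (As : Set A) : PreGraph V A L :=
  ⟨g.Tk ∩ Vs, g.Cf ∩ Vs, g.Arr ∩ As, {q | q ∈ g.inc ∧ q.1 ∈ As},
    {q | q ∈ g.ia ∧ q.1 ∈ As}, {q | q ∈ g.tl ∧ q.1 ∈ Vs}, {q | q ∈ g.cl ∧ q.1 ∈ Vs}⟩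

/-- The neighbourhood of a vertex `u`. -/
def PreGraph.Nh (g : PreGraph V A L) (u : V) : PreGraph V A L :=
  g.restrict (g.adjTo u) (g.incidentArrows u)

/-- A set of pairs is (the graph of) a function with domain `D`. -/
def IsFunctionOn {α β : Type*} (R : Set (α × β)) (D : Set α) : Prop :=
  (∀ p ∈ R, p.1 ∈ D) ∧ ∀ x ∈ D, ∃! y, (x, y) ∈ R

/-- A raw graph is a genuine directed labelled bipartite graph. -/
def IsGraph (g : PreGraph V A L) : Prop :=
  Disjoint g.Tk g.Cf ∧
  IsFunctionOn g.inc g.Arr ∧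
  (∀ a v w, (a, (v, w)) ∈ g.inc → (v ∈ g.Tk ∧ w ∈ g.Cf) ∨ (v ∈ g.Cf ∧ w ∈ g.Tk)) ∧
  IsFunctionOn g.ia g.Arr ∧ IsFunctionOn g.tl g.Tk ∧ IsFunctionOn g.cl g.Cf

/-- `ars` is the list of incoming arrows of `u`, listed in increasing index order
(the arrow at position `i` carries index `i+1`). -/
def InArrowSeq (g : PreGraph V A L) (u : V) (ars : List A) : Prop :=
  ars.Nodup ∧ (∀ a : A, a ∈ ars ↔ a ∈ g.Arr ∧ ∃ w, (a, (w, u)) ∈ g.inc) ∧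
  ∀ (i : ℕ) (a : A), ars[i]? = some a → (a, i + 1) ∈ g.ia

/-- `t` is an output token of the configurator `u`. -/
def OutputTok (g : PreGraph V A L) (u t : V) : Prop :=
  ∃ a ∈ g.Arr, (a, (u, t)) ∈ g.inc

/-- `ts` is the input token-sequence of the configurator `u`. -/
def InputTokSeq (g : PreGraph V A L) (u : V) (ts : List V) : Prop :=
  ∃ ars : List A, InArrowSeq g u ars ∧
    List.Forall₂ (fun a v => (a, (v, u)) ∈ g.inc) ars ts

/-- `τs` is the input type-sequence of the configurator `u`. -/
def InputTypeSeq (g : PreGraph V A L) (u : V) (τs : List L) : Prop :=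
  ∃ ts : List V, InputTokSeq g u ts ∧ List.Forall₂ (fun v τ => (v, τ) ∈ g.tl) ts τs

/-- `g` is a configuration of the constructor `c` (with signature `(ins, out)`),
whose single configurator is `u`. -/
def IsConfiguration (le : Set (L × L)) (g : PreGraph V A L) (u : V) (c : L)
    (ins : List L) (out : L) : Prop :=
  IsGraph g ∧ g.Cf = {u} ∧ (u, c) ∈ g.cl ∧
  g.Tk = {v | ∃ a ∈ g.Arr, (a, (v, u)) ∈ g.inc ∨ (a, (u, v)) ∈ g.inc} ∧
  (∃! a0 : A, a0 ∈ g.Arr ∧ ∃ w, (a0, (u, w)) ∈ g.inc) ∧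
  (∀ a0 ∈ g.Arr, ∀ w : V, (a0, (u, w)) ∈ g.inc →
      (a0, 0) ∈ g.ia ∧ ∃ σ, (w, σ) ∈ g.tl ∧ (σ, out) ∈ le) ∧
  (∃ ars : List A, InArrowSeq g u ars ∧ ars.length = ins.length ∧
    ∀ (i : ℕ) (a : A) (τ : L), ars[i]? = some a → ins[i]? = some τ →
      ∃ w σ, (a, (w, u)) ∈ g.inc ∧ (w, σ) ∈ g.tl ∧ (σ, τ) ∈ le)

/-- A structure graph for the constructor specification `(C, sig)` over types `(Ty, le)`. -/
def IsStructureGraph (Ty : Set L) (le : Set (L × L)) (C : Set L)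
    (sig : Set (L × (List L × L))) (g : PreGraph V A L) : Prop :=
  IsGraph g ∧ (∀ x τ, (x, τ) ∈ g.tl → τ ∈ Ty) ∧
  ∀ u ∈ g.Cf, ∃ c ins out, (u, c) ∈ g.cl ∧ c ∈ C ∧ (c, (ins, out)) ∈ sig ∧
    IsConfiguration le (g.Nh u) u c ins out

/-! ## Construction spaces -/

/-- The raw data of a construction space: a type system, a constructor specification and
a structure graph. -/
structure CSpace (V A L : Type*) where
  Ty : Set L
  le : Set (L × L)
  C : Set L
  sig : Set (L × (List L × L))
  G : PreGraph V A L

instance : Union (CSpace V A L) :=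
  ⟨fun c d => ⟨c.Ty ∪ d.Ty, c.le ∪ d.le, c.C ∪ d.C, c.sig ∪ d.sig, c.G ∪ d.G⟩⟩

/-- The raw data forms a genuine construction space. -/
def IsCSpace (Cs : CSpace V A L) : Prop :=
  IsPartialOrderOn Cs.Ty Cs.le ∧ Disjoint Cs.C Cs.Ty ∧ IsFunctionOn Cs.sig Cs.C ∧
  (∀ c ins out, (c, (ins, out)) ∈ Cs.sig →
      ins ≠ [] ∧ (∀ τ ∈ ins, τ ∈ Cs.Ty) ∧ out ∈ Cs.Ty) ∧
  IsStructureGraph Cs.Ty Cs.le Cs.C Cs.sig Cs.G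

/-- Token-functionality of the constructors of a structure graph. -/
def TokenFunctional (g : PreGraph V A L) : Prop :=
  ∀ u u' c, u ∈ g.Cf → u' ∈ g.Cf → (u, c) ∈ g.cl → (u', c) ∈ g.cl →
    ∀ ts, InputTokSeq g u ts → InputTokSeq g u' ts →
      ∀ t t', OutputTok g u t → OutputTok g u' t' → t = t'

/-- Type-functionality of the constructors of a structure graph. -/
def TypeFunctional (g : PreGraph V A L) : Prop :=
  ∀ u u' c, u ∈ g.Cf → u' ∈ g.Cf → (u, c) ∈ g.cl → (u', c) ∈ g.cl →
    ∀ τs, InputTypeSeq g u τs → InputTypeSeq g u' τs →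
      ∀ t t' τ τ', OutputTok g u t → OutputTok g u' t' →
        (t, τ) ∈ g.tl → (t', τ') ∈ g.tl → τ = τ'

def IsFunctionalGraph (g : PreGraph V A L) : Prop :=
  TokenFunctional g ∧ TypeFunctional g

/-! ## Representational systems -/

/-- The raw data of a representational system: grammatical, entailment and identification
spaces. -/
structure RSystem (V A L : Type*) where
  Gs : CSpace V A L
  Es : CSpace V A L
  Is : CSpace V A L

instance : Union (RSystem V A L) :=
  ⟨fun r s => ⟨r.Gs ∪ s.Gs, r.Es ∪ s.Es, r.Is ∪ s.Is⟩⟩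

/-- The universal space of a representational system. -/
def RSystem.uspace (R : RSystem V A L) : CSpace V A L := (R.Gs ∪ R.Es) ∪ R.Is

/-- `R` is a representational system formed over the type system `(Ty, le)` and the
meta-type system `(MTy, Mle)`. -/
def IsRSystem (R : RSystem V A L) (Ty : Set L) (le : Set (L × L))
    (MTy : Set L) (Mle : Set (L × L)) : Prop :=
  IsPartialOrderOn Ty le ∧ IsPartialOrderOn MTy Mle ∧
  IsPartialOrderOn (Ty ∪ MTy) (le ∪ Mle) ∧
  R.Gs.Ty = Ty ∧ R.Gs.le = le ∧ IsCSpace R.Gs ∧ IsFunctionalGraph R.Gs.G ∧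
  R.Es.Ty = Ty ∧ R.Es.le = le ∧ IsCSpace R.Es ∧ R.Es.G.Tk ⊆ R.Gs.G.Tk ∧
  R.Is.Ty = Ty ∪ MTy ∧ R.Is.le = le ∪ Mle ∧ IsCSpace R.Is ∧
  (∀ x ∈ R.Is.G.Tk, x ∉ R.Gs.G.Tk → ∃ τ ∈ MTy, (x, τ) ∈ R.Is.G.tl) ∧
  (∀ x ∈ R.Is.G.Tk, (∃ u ∈ R.Is.G.Cf, OutputTok R.Is.G u x) → x ∉ R.Gs.G.Tk) ∧
  IsCSpace (R.Gs ∪ R.Es) ∧ IsCSpace (R.Gs ∪ R.Is) ∧ IsCSpace (R.Es ∪ R.Is) ∧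
  Disjoint R.Gs.C R.Es.C ∧ Disjoint R.Gs.C R.Is.C ∧ Disjoint R.Es.C R.Is.C

/-- `(R, R', Is'')` is an inter-representational-system encoding, where `R` is formed over
`(Ty, le)` and `(MTy, Mle)`, `R'` over `(Ty', le')` and `(MTy', Mle')`, and `Is''` is an
identification space formed over `(Ty ∪ Ty', le ∪ le')` and `(MTy'', Mle'')`. -/
def IsIRSE (R R' : RSystem V A L) (Is'' : CSpace V A L)
    (Ty : Set L) (le : Set (L × L)) (MTy : Set L) (Mle : Set (L × L))
    (Ty' : Set L) (le' : Set (L × L)) (MTy' : Set L) (Mle' : Set (L × L))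
    (MTy'' : Set L) (Mle'' : Set (L × L)) : Prop :=
  IsRSystem R Ty le MTy Mle ∧ IsRSystem R' Ty' le' MTy' Mle' ∧
  IsRSystem (R ∪ R') (Ty ∪ Ty') (le ∪ le') (MTy ∪ MTy') (Mle ∪ Mle') ∧
  IsPartialOrderOn MTy'' Mle'' ∧
  IsPartialOrderOn ((Ty ∪ Ty') ∪ MTy'') ((le ∪ le') ∪ Mle'') ∧
  Is''.Ty = (Ty ∪ Ty') ∪ MTy'' ∧ Is''.le = (le ∪ le') ∪ Mle'' ∧ IsCSpace Is'' ∧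
  MTy ∪ MTy' ⊆ MTy'' ∧ Mle ∪ Mle' ⊆ Mle'' ∧
  (∀ x ∈ Is''.G.Tk, x ∉ (R.Gs ∪ R'.Gs).G.Tk → ∃ τ ∈ MTy'', (x, τ) ∈ Is''.G.tl) ∧
  (∀ x ∈ Is''.G.Tk, (∃ u ∈ Is''.G.Cf, OutputTok Is''.G u x) →
      x ∉ (R.Gs ∪ R'.Gs).G.Tk) ∧
  IsCSpace ((R.Gs ∪ R'.Gs) ∪ Is'') ∧ IsCSpace ((R.Es ∪ R'.Es) ∪ Is'') ∧
  IsCSpace ((R.Is ∪ R'.Is) ∪ Is'') ∧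
  Disjoint Is''.C (R.Gs ∪ R'.Gs).C ∧ Disjoint Is''.C (R.Es ∪ R'.Es).C ∧
  Disjoint Is''.C (R.Is ∪ R'.Is).C

/-! ## Trails -/

/-- A trail candidate: a list of arrows together with an associated source and target vertex
(needed for the empty trail `[]_v`). -/
structure Trail (V A : Type*) where
  arrows : List A
  src : V
  tgt : V

/-- The empty trail `[]_v`. -/
def Trail.nil {V A : Type*} (v : V) : Trail V A := ⟨[], v, v⟩

/-- Concatenation `e ⊕ w` of trails. -/
def Trail.append {V A : Type*} (e w : Trail V A) : Trail V A :=
  ⟨e.arrows ++ w.arrows, e.src, w.tgt⟩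

/-- The image of a trail under vertex/arrow maps. -/
def Trail.map {V A : Type*} (fv : V → V) (fa : A → A) (tr : Trail V A) : Trail V A :=
  ⟨tr.arrows.map fa, fv tr.src, fv tr.tgt⟩

/-- The arrows chain through the graph from `s` to `t`. -/
def ChainIn (g : PreGraph V A L) : List A → V → V → Prop
  | [], s, t => s = t
  | a :: rest, s, t => a ∈ g.Arr ∧ ∃ m, (a, (s, m)) ∈ g.inc ∧ ChainIn g rest m t

/-- `tr` is a trail in `g`. -/
def IsTrailIn (g : PreGraph V A L) (tr : Trail V A) : Prop :=
  tr.arrows.Nodup ∧ ChainIn g tr.arrows tr.src tr.tgt ∧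
  tr.src ∈ g.Tk ∪ g.Cf ∧ tr.tgt ∈ g.Tk ∪ g.Cf

/-- A trail is well-formed provided its source and target are tokens. -/
def WellFormed (g : PreGraph V A L) (tr : Trail V A) : Prop :=
  tr.src ∈ g.Tk ∧ tr.tgt ∈ g.Tk

/-- `tr` is (source-)extendable by the arrow `a`. -/
def ExtendableBy (g : PreGraph V A L) (tr : Trail V A) (a : A) : Prop :=
  a ∈ g.Arr ∧ a ∉ tr.arrows ∧ ∃ s, (a, (s, tr.src)) ∈ g.inc

def Extendable (g : PreGraph V A L) (tr : Trail V A) : Prop :=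
  ∃ a, ExtendableBy g tr a

def NonExtendable (g : PreGraph V A L) (tr : Trail V A) : Prop :=
  ¬ Extendable g tr

/-- `TES g tr S` holds iff `S` is the trail extension sequence of the trail `tr` in `g`,
following the recursive definition of TES. -/
inductive TES (g : PreGraph V A L) : Trail V A → List (Trail V A) → Prop where
  | nonext (tr : Trail V A) (h : NonExtendable g tr) :
      TES g tr [⟨[], tr.src, tr.src⟩]
  | ext (tr : Trail V A) (a : A) (u : V) (ars : List A)
      (Ss : List (List (Trail V A)))
      (hext : ExtendableBy g tr a)
      (hinc : (a, (u, tr.src)) ∈ g.inc)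
      (hars : InArrowSeq g u ars)
      (hlen : Ss.length = ars.length)
      (hrec : ∀ (i : ℕ) (ai : A) (si : V) (Si : List (Trail V A)),
          ars[i]? = some ai → Ss[i]? = some Si → (ai, (si, u)) ∈ g.inc →
          TES g ⟨ai :: a :: tr.arrows, si, tr.tgt⟩ Si) :
      TES g tr (List.flatten (List.zipWith
        (fun (ai : A) (Si : List (Trail V A)) =>
          Si.map (fun e => (⟨e.arrows ++ [ai, a], e.src, tr.src⟩ : Trail V A)))
        ars Ss))

/-- The sequence of sources of a sequence of trails. -/
def srcSeq {V A : Type*} (S : List (Trail V A)) : List V := S.map Trail.src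

/-- The right product `S ◁ w`, appending the trail `w` to each trail in `S`. -/
def rprod {V A : Type*} (S : List (Trail V A)) (w : Trail V A) : List (Trail V A) :=
  S.map fun e => e.append w

/-! ## Constructions -/

/-- Every token is the target of at most one arrow. -/
def UniStructured (g : PreGraph V A L) : Prop :=
  ∀ x ∈ g.Tk, ∀ a ∈ g.Arr, ∀ b ∈ g.Arr,
    (∃ w, (a, (w, x)) ∈ g.inc) → (∃ w, (b, (w, x)) ∈ g.inc) → a = b

/-- `(g, t)` is a construction in the construction space `Cs`: `g` is a finite uni-structured
structure graph (a subgraph of the structure graph of `Cs`), `t` is a token of `g`, and every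
vertex of `g` is the source of a trail targeting `t`. -/
def IsConstruction (Cs : CSpace V A L) (g : PreGraph V A L) (t : V) : Prop :=
  g.Subgraph Cs.G ∧ IsStructureGraph Cs.Ty Cs.le Cs.C Cs.sig g ∧
  g.Tk.Finite ∧ g.Cf.Finite ∧ g.Arr.Finite ∧ UniStructured g ∧ t ∈ g.Tk ∧
  ∀ v ∈ g.Tk ∪ g.Cf, ∃ tr : Trail V A, IsTrailIn g tr ∧ tr.src = v ∧ tr.tgt = t

/-- `(g, t)` is a construction *in* `Cs` in the strong sense: moreover every configurator of `g`
has its full neighbourhood from the structure graph of `Cs`. -/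
def IsConstructionIn (Cs : CSpace V A L) (g : PreGraph V A L) (t : V) : Prop :=
  IsConstruction Cs g t ∧ ∀ u ∈ g.Cf, g.Nh u = Cs.G.Nh u

/-- A trivial construction: the construct is its only vertex. -/
def TrivialC (g : PreGraph V A L) (t : V) : Prop := g.Tk ∪ g.Cf = {t}

/-- A basic construction: exactly one configurator. -/
def BasicC (g : PreGraph V A L) : Prop := ∃ u, g.Cf = {u}

/-- The set of arrows occurring in a sequence of trails. -/
def trailArrowSet {V A : Type*} (TR : List (Trail V A)) : Set A :=
  {a | ∃ tr ∈ TR, a ∈ tr.arrows}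

/-- The vertices of the `TR`-graph: vertices incident to arrows of trails of `TR`,
together with the associated vertex of any empty trail of `TR`. -/
def trailVertexSet (g : PreGraph V A L) (TR : List (Trail V A)) : Set V :=
  {v | (∃ a ∈ trailArrowSet TR, ∃ w, (a, (v, w)) ∈ g.inc ∨ (a, (w, v)) ∈ g.inc) ∨
    ∃ tr ∈ TR, tr.arrows = [] ∧ tr.src = v}

/-- The `TR`-graph `v(TR)`. -/
def trGraph (g : PreGraph V A L) (TR : List (Trail V A)) : PreGraph V A L :=
  g.restrict (trailVertexSet g TR) (trailArrowSet TR)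

/-- `((g', t), ics)` is a split of the construction `(g, t)`: `(g', t)` is a generator and
`ics` is the corresponding induced construction sequence (each induced construction is
`(v(TES(tri)), source(tri))`, the TES being computed in `(g, t)`). -/
def IsSplit (Cs : CSpace V A L) (g : PreGraph V A L) (t : V)
    (g' : PreGraph V A L) (ics : List (PreGraph V A L × V)) : Prop :=
  IsConstruction Cs g' t ∧ g'.Subgraph g ∧
  ∃ trs : List (Trail V A), TES g' (Trail.nil t) trs ∧ ics.length = trs.length ∧
    ∀ (i : ℕ) (tri : Trail V A), trs[i]? = some tri →
      ∃ Si : List (Trail V A), TES g tri Si ∧ ics[i]? = some (trGraph g Si, tri.src)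

/-! ## Decompositions -/

/-- A decomposition tree: vertices labelled by a graph and a token, with the incoming arrows
of every vertex given in index order by a list of subtrees. -/
inductive DTree (V A L : Type*) where
  | node : PreGraph V A L → V → List (DTree V A L) → DTree V A L

def DTree.rootGraph : DTree V A L → PreGraph V A L
  | .node g _ _ => g

def DTree.rootTok : DTree V A L → V
  | .node _ t _ => t

def DTree.kids : DTree V A L → List (DTree V A L)
  | .node _ _ cs => cs

/-- `IsDecompositionOf Cs D g t` holds iff `D` is a decomposition of the construction
`(g, t)` in `Cs`. -/
inductive IsDecompositionOf (Cs : CSpace V A L) : DTree V A L → PreGraph V A L → V → Prop where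
  | single (g : PreGraph V A L) (t : V) (h : IsConstruction Cs g t) :
      IsDecompositionOf Cs (.node g t []) g t
  | split (g : PreGraph V A L) (t : V) (g' : PreGraph V A L)
      (ics : List (PreGraph V A L × V)) (cs : List (DTree V A L))
      (hc : IsConstruction Cs g t)
      (hsplit : IsSplit Cs g t g' ics)
      (hlen : cs.length = ics.length)
      (hrec : ∀ (i : ℕ) (ci : DTree V A L) (gi : PreGraph V A L) (ti : V),
          cs[i]? = some ci → ics[i]? = some (gi, ti) → IsDecompositionOf Cs ci gi ti) :
      IsDecompositionOf Cs (.node g' t cs) g t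

/-- `LcsRel D ls` holds iff `ls` is the leaf construction-sequence of `D`. -/
inductive LcsRel : DTree V A L → List (PreGraph V A L × V) → Prop where
  | leaf (g : PreGraph V A L) (t : V) : LcsRel (.node g t []) [(g, t)]
  | node (g : PreGraph V A L) (t : V) (cs : List (DTree V A L))
      (ls : List (List (PreGraph V A L × V)))
      (hne : cs ≠ []) (hlen : ls.length = cs.length)
      (h : ∀ (i : ℕ) (ci : DTree V A L) (li : List (PreGraph V A L × V)),
          cs[i]? = some ci → ls[i]? = some li → LcsRel ci li) :
      LcsRel (.node g t cs) ls.flatten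

/-- `(p, w)` is one of the constructions labelling a vertex of the decomposition tree. -/
inductive LabelOf : DTree V A L → PreGraph V A L → V → Prop where
  | root (g : PreGraph V A L) (t : V) (cs : List (DTree V A L)) :
      LabelOf (.node g t cs) g t
  | child (g : PreGraph V A L) (t : V) (cs : List (DTree V A L))
      (c : DTree V A L) (p : PreGraph V A L) (w : V) :
      c ∈ cs → LabelOf c p w → LabelOf (.node g t cs) p w

/-- The union of all the graphs labelling vertices of the decomposition tree
(the graph of the construction `ct(D)` of the decomposition `D`). -/
def DTree.ctGraph (D : DTree V A L) : PreGraph V A L :=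
  ⟨{x | ∃ p w, LabelOf D p w ∧ x ∈ p.Tk},
   {x | ∃ p w, LabelOf D p w ∧ x ∈ p.Cf},
   {a | ∃ p w, LabelOf D p w ∧ a ∈ p.Arr},
   {q | ∃ p w, LabelOf D p w ∧ q ∈ p.inc},
   {q | ∃ p w, LabelOf D p w ∧ q ∈ p.ia},
   {q | ∃ p w, LabelOf D p w ∧ q ∈ p.tl},
   {q | ∃ p w, LabelOf D p w ∧ q ∈ p.cl}⟩

/-- Every vertex label of the decomposition tree satisfies `P`. -/
inductive AllLabels (P : PreGraph V A L → V → Prop) : DTree V A L → Prop where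
  | node (g : PreGraph V A L) (t : V) (cs : List (DTree V A L)) :
      P g t → (∀ c, c ∈ cs → AllLabels P c) → AllLabels P (.node g t cs)

/-- The subtree of a decomposition tree at a given position (a path of child indices). -/
def subtreeAt : List ℕ → DTree V A L → Option (DTree V A L)
  | [], D => some D
  | i :: rest, .node _ _ cs =>
    match cs[i]? with
    | some c => subtreeAt rest c
    | none => none

/-! ## Patterns and embeddings -/

/-- An embedding of the graph `g` into the graph `p`: an isomorphism preserving arrow indices
and configurator labels, with token labels respecting the subtype relation `le`. -/
def IsEmbedding (le : Set (L × L)) (g p : PreGraph V A L) (fv : V → V) (fa : A → A) : Prop :=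
  (∀ x ∈ g.Tk, fv x ∈ p.Tk) ∧ (∀ x ∈ g.Cf, fv x ∈ p.Cf) ∧
  (∀ x ∈ g.Tk ∪ g.Cf, ∀ y ∈ g.Tk ∪ g.Cf, fv x = fv y → x = y) ∧
  (∀ y ∈ p.Tk, ∃ x ∈ g.Tk, fv x = y) ∧ (∀ y ∈ p.Cf, ∃ x ∈ g.Cf, fv x = y) ∧
  (∀ a ∈ g.Arr, fa a ∈ p.Arr) ∧
  (∀ a ∈ g.Arr, ∀ b ∈ g.Arr, fa a = fa b → a = b) ∧
  (∀ b ∈ p.Arr, ∃ a ∈ g.Arr, fa a = b) ∧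
  (∀ a v w, (a, (v, w)) ∈ g.inc → (fa a, (fv v, fv w)) ∈ p.inc) ∧
  (∀ a n, (a, n) ∈ g.ia → (fa a, n) ∈ p.ia) ∧
  (∀ u c, (u, c) ∈ g.cl → (fv u, c) ∈ p.cl) ∧
  (∀ x τ, (x, τ) ∈ g.tl → ∃ σ, (fv x, σ) ∈ p.tl ∧ (τ, σ) ∈ le)

/-- The construction `(g, t)` matches the pattern `(p, v)`. -/
def MatchesPattern (le : Set (L × L)) (g : PreGraph V A L) (t : V)
    (p : PreGraph V A L) (v : V) : Prop :=
  ∃ fv fa, IsEmbedding le g p fv fa ∧ fv t = v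

/-- `Ps` is a pattern space for `Cs`: a construction space over the same type system and
constructor specification such that every construction of `Cs` matches some construction
of `Ps`. -/
def IsPatternSpace (Cs Ps : CSpace V A L) : Prop :=
  Ps.Ty = Cs.Ty ∧ Ps.le = Cs.le ∧ Ps.C = Cs.C ∧ Ps.sig = Cs.sig ∧ IsCSpace Ps ∧
  ∀ g t, IsConstruction Cs g t →
    ∃ p v, IsConstruction Ps p v ∧ MatchesPattern Cs.le g t p v

/-- Vertex-wise matching of two same-shape decomposition trees under a common pair of maps. -/
inductive DMatches (le : Set (L × L)) (fv : V → V) (fa : A → A) :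
    DTree V A L → DTree V A L → Prop where
  | node (g : PreGraph V A L) (t : V) (p : PreGraph V A L) (v : V)
      (cs ds : List (DTree V A L))
      (hemb : IsEmbedding le g p fv fa) (ht : fv t = v)
      (hlen : cs.length = ds.length)
      (hrec : ∀ (i : ℕ) (ci di : DTree V A L), cs[i]? = some ci → ds[i]? = some di →
          DMatches le fv fa ci di) :
      DMatches le fv fa (.node g t cs) (.node p v ds)

/-- The decomposition `D` matches the (pattern) decomposition `Δ`: there is an arrow-index
preserving isomorphism of trees together with an embedding of `ct(D)` into `ct(Δ)` whose
restriction to each vertex label is an embedding into the corresponding pattern label. -/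
def DecompositionMatches (le : Set (L × L)) (D Δ : DTree V A L) : Prop :=
  ∃ fv fa, IsEmbedding le D.ctGraph Δ.ctGraph fv fa ∧ fv D.rootTok = Δ.rootTok ∧
    DMatches le fv fa D Δ

/-! ## Descriptions -/

/-- A description: a set of decompositions of patterns (constructions in the pattern
space `Ps`). -/
def IsDescriptionOf (Ps : CSpace V A L) (Ds : Set (DTree V A L)) : Prop :=
  ∀ Δ ∈ Ds, ∃ p v, IsConstruction Ps p v ∧ IsDecompositionOf Ps Δ p v

/-- The description `Ds` is complete for `Cs`. -/
def CompleteDescription (Cs : CSpace V A L) (Ds : Set (DTree V A L)) : Prop :=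
  ∀ g t, IsConstruction Cs g t →
    ∃ Δ ∈ Ds, ∃ D, IsDecompositionOf Cs D g t ∧ DecompositionMatches Cs.le D Δ

/-- The set of patterns labelling vertices of decompositions in `Ds`. -/
def PatternsOf (Ds : Set (DTree V A L)) : Set (PreGraph V A L × V) :=
  {pv | ∃ Δ ∈ Ds, LabelOf Δ pv.1 pv.2}

/-- Label-preserving isomorphism of patterns/constructions. -/
def LabelIsomorphic (g : PreGraph V A L) (t : V) (p : PreGraph V A L) (v : V) : Prop :=
  ∃ fv fa, IsEmbedding {q : L × L | q.1 = q.2} g p fv fa ∧ fv t = v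

/-- The description `Ds` is compact: finitely many patterns up to label-preserving
isomorphism. -/
def CompactDescription (Ds : Set (DTree V A L)) : Prop :=
  ∃ Reps : Set (PreGraph V A L × V), Reps.Finite ∧
    ∀ pv ∈ PatternsOf Ds, ∃ qw ∈ Reps, LabelIsomorphic pv.1 pv.2 qw.1 qw.2

/-! ## Transformation constraints and structural transformations -/

/-- A transformation-constraint-shaped triple: two patterns (or constructions) together with
a set of patterns (or constructions). -/
structure TConstraint (V A L : Type*) where
  pa : PreGraph V A L
  ca : V
  pb : PreGraph V A L
  cb : V
  Pc : Set (PreGraph V A L × V)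

/-- The union of the graphs of a set of patterns. -/
def pGraph (P : Set (PreGraph V A L × V)) : PreGraph V A L :=
  ⟨{x | ∃ pv ∈ P, x ∈ pv.1.Tk}, {x | ∃ pv ∈ P, x ∈ pv.1.Cf},
   {a | ∃ pv ∈ P, a ∈ pv.1.Arr}, {q | ∃ pv ∈ P, q ∈ pv.1.inc},
   {q | ∃ pv ∈ P, q ∈ pv.1.ia}, {q | ∃ pv ∈ P, q ∈ pv.1.tl},
   {q | ∃ pv ∈ P, q ∈ pv.1.cl}⟩

/-- A respectful embedding of the set of patterns `P` into the set of patterns `P'`. -/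
def RespectfulEmbedding (le : Set (L × L)) (P P' : Set (PreGraph V A L × V))
    (fv : V → V) (fa : A → A) : Prop :=
  IsEmbedding le (pGraph P) (pGraph P') fv fa ∧
  ∀ pv ∈ P, ∃ qw ∈ P', IsEmbedding le pv.1 qw.1 fv fa ∧ fv pv.2 = qw.2

/-- Satisfaction of one transformation-constraint-shaped triple by another: embeddings of the
first two components, a respectful embedding of the third, whose common underlying maps give
an isomorphism of the unions of the graphs. -/
def TCSatisfies (le : Set (L × L)) (s s' : TConstraint V A L) : Prop :=
  ∃ fv fa,
    IsEmbedding le s.pa s'.pa fv fa ∧ fv s.ca = s'.ca ∧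
    IsEmbedding le s.pb s'.pb fv fa ∧ fv s.cb = s'.cb ∧
    RespectfulEmbedding le s.Pc s'.Pc fv fa ∧
    IsEmbedding le ((s.pa ∪ s.pb) ∪ pGraph s.Pc) ((s'.pa ∪ s'.pb) ∪ pGraph s'.Pc) fv fa

/-- A transformation constraint for an encoding described by `(Ds, Ds', P'')`. -/
def IsTransformationConstraint (Ds Ds' : Set (DTree V A L))
    (P'' : Set (PreGraph V A L × V)) (s : TConstraint V A L) : Prop :=
  (s.pa, s.ca) ∈ PatternsOf Ds ∧ (s.pb, s.cb) ∈ PatternsOf Ds' ∧ s.Pc ⊆ P''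

/-- A constraint assignment for `Δ` and `Δ'`: a partial function (modelled with `Option`) on
pairs of vertices (paths) whose values are transformation constraints from `S0` matched by the
corresponding labels. -/
def IsConstraintAssignment (leR leR' : Set (L × L)) (S0 : Set (TConstraint V A L))
    (Δ Δ' : DTree V A L) (Lm : List ℕ → List ℕ → Option (TConstraint V A L)) : Prop :=
  ∀ pi pi' s, Lm pi pi' = some s → s ∈ S0 ∧
    (∃ δ, subtreeAt pi Δ = some δ ∧
        MatchesPattern leR δ.rootGraph δ.rootTok s.pa s.ca) ∧
    (∃ δ', subtreeAt pi' Δ' = some δ' ∧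
        MatchesPattern leR' δ'.rootGraph δ'.rootTok s.pb s.cb)

/-- The constraint assignment `Lm` is satisfied by the pair of decompositions `(D, D')`
(whose vertices correspond, via the shape-preserving matchings, to those of `Δ`, `Δ'`). -/
def LSatisfiedBy (leI : Set (L × L)) (Ip : CSpace V A L)
    (Lm : List ℕ → List ℕ → Option (TConstraint V A L)) (D D' : DTree V A L) : Prop :=
  ∀ pi pi' s d d', Lm pi pi' = some s →
    subtreeAt pi D = some d → subtreeAt pi' D' = some d' →
    ∃ Cset : Set (PreGraph V A L × V),
      (∀ pv ∈ Cset, IsConstruction Ip pv.1 pv.2) ∧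
      TCSatisfies leI ⟨d.rootGraph, d.rootTok, d'.rootGraph, d'.rootTok, Cset⟩ s

/-- `(g', t')` is a structural `L`-transformation of `(g, t)` (with respect to the pattern
decompositions `Δ`, `Δ'` for the universal spaces `Ru`, `Ru'` and the inter-property
identification space `Ip`). -/
def IsStructuralLTransformation (Ru Ru' Ip : CSpace V A L) (Δ Δ' : DTree V A L)
    (Lm : List ℕ → List ℕ → Option (TConstraint V A L))
    (g : PreGraph V A L) (t : V) (g' : PreGraph V A L) (t' : V) : Prop :=
  (∃ D, IsDecompositionOf Ru D g t ∧ DecompositionMatches Ru.le D Δ) ∧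
  (∃ D', IsDecompositionOf Ru' D' g' t' ∧ DecompositionMatches Ru'.le D' Δ') ∧
  ∀ D D', IsDecompositionOf Ru D g t → DecompositionMatches Ru.le D Δ →
    IsDecompositionOf Ru' D' g' t' → DecompositionMatches Ru'.le D' Δ' →
    LSatisfiedBy Ip.le Ip Lm D D'

/-- Partial satisfaction: the constraint is only checked at vertices of the pattern
decomposition `Δh` whose label is already a construction in `Ru'`. -/
def LPartialSatisfiedBy (leI : Set (L × L)) (Ip Ru' : CSpace V A L)
    (Lm : List ℕ → List ℕ → Option (TConstraint V A L)) (D Δh : DTree V A L) : Prop :=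
  ∀ pi pi' s d δh, Lm pi pi' = some s →
    subtreeAt pi D = some d → subtreeAt pi' Δh = some δh →
    IsConstructionIn Ru' δh.rootGraph δh.rootTok →
    ∃ Cset : Set (PreGraph V A L × V),
      (∀ pv ∈ Cset, IsConstruction Ip pv.1 pv.2) ∧
      TCSatisfies leI ⟨d.rootGraph, d.rootTok, δh.rootGraph, δh.rootTok, Cset⟩ s

/-- The pattern `(ph, vh)` (a construction in the pattern space `Ps'` for `Ru'`) is a partial
`L`-transformation of the construction `(g, t)`. -/
def IsPartialLTransformation (Ru Ru' Ip Ps' : CSpace V A L) (Δ Δ' : DTree V A L)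
    (Lm : List ℕ → List ℕ → Option (TConstraint V A L))
    (g : PreGraph V A L) (t : V) (ph : PreGraph V A L) (vh : V) : Prop :=
  (∃ D, IsDecompositionOf Ru D g t ∧ DecompositionMatches Ru.le D Δ) ∧
  (∃ Δh, IsDecompositionOf Ps' Δh ph vh ∧ DecompositionMatches Ru'.le Δh Δ') ∧
  ∀ D Δh, IsDecompositionOf Ru D g t → DecompositionMatches Ru.le D Δ →
    IsDecompositionOf Ps' Δh ph vh → DecompositionMatches Ru'.le Δh Δ' →
    LPartialSatisfiedBy Ip.le Ip Ru' Lm D Δh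

/-! ## Validity, soundness, leaf instantiation -/

/-- Validity of `Lm` for `(g, t)` and `(p, v)` at the pair of vertices `(pi, pi')`. -/
def ValidAt (Ru Ru' Ip Ps' : CSpace V A L) (Δ Δ' : DTree V A L)
    (Lm : List ℕ → List ℕ → Option (TConstraint V A L))
    (g : PreGraph V A L) (t : V) (p : PreGraph V A L) (v : V)
    (pi pi' : List ℕ) : Prop :=
  ∀ D Δh Dsub Δhsub Δsub Δsub',
    IsDecompositionOf Ru D g t → DecompositionMatches Ru.le D Δ →
    IsDecompositionOf Ps' Δh p v → DecompositionMatches Ru'.le Δh Δ' →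
    subtreeAt pi D = some Dsub → subtreeAt pi' Δh = some Δhsub →
    subtreeAt pi Δ = some Δsub → subtreeAt pi' Δ' = some Δsub' →
    IsConstructionIn Ru' Δhsub.ctGraph Δhsub.rootTok →
    IsStructuralLTransformation Ru Ru' Ip Δsub Δsub'
      (fun σ σ' => Lm (pi ++ σ) (pi' ++ σ'))
      Dsub.ctGraph Dsub.rootTok Δhsub.ctGraph Δhsub.rootTok

/-- Ancestor-validity: validity at every pair of proper descendants-in-the-tree
("ancestors" in the paper's in-tree terminology). -/
def AncestorValidAt (Ru Ru' Ip Ps' : CSpace V A L) (Δ Δ' : DTree V A L)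
    (Lm : List ℕ → List ℕ → Option (TConstraint V A L))
    (g : PreGraph V A L) (t : V) (p : PreGraph V A L) (v : V)
    (pi pi' : List ℕ) : Prop :=
  ∀ σ σ' : List ℕ, σ ≠ [] → σ' ≠ [] →
    (∃ d, subtreeAt (pi ++ σ) Δ = some d) → (∃ d', subtreeAt (pi' ++ σ') Δ' = some d') →
    ValidAt Ru Ru' Ip Ps' Δ Δ' Lm g t p v (pi ++ σ) (pi' ++ σ')

/-- Soundness of a constraint assignment. -/
def SoundAssignment (Ru Ru' Ip Ps' : CSpace V A L) (Δ Δ' : DTree V A L)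
    (Lm : List ℕ → List ℕ → Option (TConstraint V A L)) : Prop :=
  ∀ g t, IsConstructionIn Ru g t →
    (∃ D, IsDecompositionOf Ru D g t ∧ DecompositionMatches Ru.le D Δ) →
    ∀ p v, IsConstruction Ps' p v →
      (∃ Δh, IsDecompositionOf Ps' Δh p v ∧ DecompositionMatches Ru'.le Δh Δ') →
      ∀ pi pi', (∃ d, subtreeAt pi Δ = some d) → (∃ d', subtreeAt pi' Δ' = some d') →
        AncestorValidAt Ru Ru' Ip Ps' Δ Δ' Lm g t p v pi pi' →
        ValidAt Ru Ru' Ip Ps' Δ Δ' Lm g t p v pi pi'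

/-- The pattern `(p, v)` leaf-instantiates `Δ'`: it matches `Δ'` and every leaf of its
`Δ'`-canonical decomposition is labelled by a construction in `Ru'`. -/
def LeafInstantiates (Ru' Ps' : CSpace V A L) (Δ' : DTree V A L)
    (p : PreGraph V A L) (v : V) : Prop :=
  (∃ Δh, IsDecompositionOf Ps' Δh p v ∧ DecompositionMatches Ru'.le Δh Δ') ∧
  ∀ Δh, IsDecompositionOf Ps' Δh p v → DecompositionMatches Ru'.le Δh Δ' →
    ∀ pi δh, subtreeAt pi Δh = some δh → δh.kids = [] →
      IsConstructionIn Ru' δh.rootGraph δh.rootTok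

/-- A complete extension of a pattern `(p, v)` that leaf-instantiates `Δ'`. -/
def CompleteExtension (Ru' Ps' : CSpace V A L) (Δ' : DTree V A L)
    (p : PreGraph V A L) (v : V) (g' : PreGraph V A L) (t' : V) : Prop :=
  IsConstructionIn Ru' g' t' ∧
  ∃ fv fa, IsEmbedding Ru'.le g' p fv fa ∧ fv t' = v ∧
    ∀ Δh, IsDecompositionOf Ps' Δh p v → DecompositionMatches Ru'.le Δh Δ' →
      ∀ pi δh, subtreeAt pi Δh = some δh → δh.kids = [] →
        ∀ x ∈ δh.rootGraph.Tk, x ∈ g'.Tk ∧ fv x = x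

/-- `(g, t)` and `(p, v)` are valid at the leaves of `Δ` and `Δ'`. -/
def ValidAtLeaves (Ru Ru' Ip Ps' : CSpace V A L) (Δ Δ' : DTree V A L)
    (Lm : List ℕ → List ℕ → Option (TConstraint V A L))
    (g : PreGraph V A L) (t : V) (p : PreGraph V A L) (v : V) : Prop :=
  ∀ pi pi' δ δ', subtreeAt pi Δ = some δ → subtreeAt pi' Δ' = some δ' →
    δ.kids = [] → δ'.kids = [] →
    ValidAt Ru Ru' Ip Ps' Δ Δ' Lm g t p v pi pi'


/-- the union of pairwise compatible type systems with a third compatible type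
system is a type system. -/
theorem union_of_pairwise_compatible_type_systems {U : Type*}
    (Ty1 Ty2 Ty3 : Set U) (le1 le2 le3 : Set (U × U))
    (h1 : IsPartialOrderOn Ty1 le1) (h2 : IsPartialOrderOn Ty2 le2)
    (h3 : IsPartialOrderOn Ty3 le3)
    (h12 : IsPartialOrderOn (Ty1 ∪ Ty2) (le1 ∪ le2))
    (h13 : IsPartialOrderOn (Ty1 ∪ Ty3) (le1 ∪ le3))
    (h23 : IsPartialOrderOn (Ty2 ∪ Ty3) (le2 ∪ le3)) :
    IsPartialOrderOn ((Ty1 ∪ Ty2) ∪ Ty3) ((le1 ∪ le2) ∪ le3) := by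
  obtain ⟨d1, r1, a1, t1⟩ := h1
  obtain ⟨d2, r2, a2, t2⟩ := h2
  obtain ⟨d3, r3, a3, t3⟩ := h3
  obtain ⟨d12, r12, a12, t12⟩ := h12
  obtain ⟨d13, r13, a13, t13⟩ := h13
  obtain ⟨d23, r23, a23, t23⟩ := h23
  refine ⟨?_, ?_, ?_, ?_⟩
  · rintro p ((hp | hp) | hp)
    · exact ⟨Or.inl (Or.inl (d1 p hp).1), Or.inl (Or.inl (d1 p hp).2)⟩
    · exact ⟨Or.inl (Or.inr (d2 p hp).1), Or.inl (Or.inr (d2 p hp).2)⟩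
    · exact ⟨Or.inr (d3 p hp).1, Or.inr (d3 p hp).2⟩
  · rintro τ ((hτ | hτ) | hτ)
    · exact Or.inl (Or.inl (r1 τ hτ))
    · exact Or.inl (Or.inr (r2 τ hτ))
    · exact Or.inr (r3 τ hτ)
  · rintro a b ((hab | hab) | hab) ((hba | hba) | hba)
    · exact a1 a b hab hba
    · exact a12 a b (Or.inl hab) (Or.inr hba)
    · exact a13 a b (Or.inl hab) (Or.inr hba)
    · exact a12 a b (Or.inr hab) (Or.inl hba)
    · exact a2 a b hab hba
    · exact a23 a b (Or.inl hab) (Or.inr hba)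
    · exact a13 a b (Or.inr hab) (Or.inl hba)
    · exact a23 a b (Or.inr hab) (Or.inl hba)
    · exact a3 a b hab hba
  · rintro a b c ((hab | hab) | hab) ((hbc | hbc) | hbc)
    · exact Or.inl (Or.inl (t1 a b c hab hbc))
    · rcases t12 a b c (Or.inl hab) (Or.inr hbc) with h | h
      · exact Or.inl (Or.inl h)
      · exact Or.inl (Or.inr h)
    · rcases t13 a b c (Or.inl hab) (Or.inr hbc) with h | h
      · exact Or.inl (Or.inl h)
      · exact Or.inr h
    · rcases t12 a b c (Or.inr hab) (Or.inl hbc) with h | h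
      · exact Or.inl (Or.inl h)
      · exact Or.inl (Or.inr h)
    · exact Or.inl (Or.inr (t2 a b c hab hbc))
    · rcases t23 a b c (Or.inl hab) (Or.inr hbc) with h | h
      · exact Or.inl (Or.inr h)
      · exact Or.inr h
    · rcases t13 a b c (Or.inr hab) (Or.inl hbc) with h | h
      · exact Or.inl (Or.inl h)
      · exact Or.inr h
    · rcases t23 a b c (Or.inr hab) (Or.inl hbc) with h | h
      · exact Or.inl (Or.inr h)
      · exact Or.inr h
    · exact Or.inr (t3 a b c hab hbc)

end RST
end

section
/- Let Cs1, Cs2 and Cs3 be pairwise compatible construction spaces. Then Cs1 ∪ Cs2 is compatible with Cs3; that is, the componentwise union (Cs1 ∪ Cs2) ∪ Cs3 is a construction space. -/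
namespace RST

variable {V A L : Type*}

/-! ## Auxiliary lemmas for Statement 2 -/

section Aux

variable {V A L : Type*}

@[simp] lemma PreGraph.union_Tk (g h : PreGraph V A L) : (g ∪ h).Tk = g.Tk ∪ h.Tk := rfl
@[simp] lemma PreGraph.union_Cf (g h : PreGraph V A L) : (g ∪ h).Cf = g.Cf ∪ h.Cf := rfl
@[simp] lemma PreGraph.union_Arr (g h : PreGraph V A L) : (g ∪ h).Arr = g.Arr ∪ h.Arr := rfl
@[simp] lemma PreGraph.union_inc (g h : PreGraph V A L) : (g ∪ h).inc = g.inc ∪ h.inc := rfl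
@[simp] lemma PreGraph.union_ia (g h : PreGraph V A L) : (g ∪ h).ia = g.ia ∪ h.ia := rfl
@[simp] lemma PreGraph.union_tl (g h : PreGraph V A L) : (g ∪ h).tl = g.tl ∪ h.tl := rfl
@[simp] lemma PreGraph.union_cl (g h : PreGraph V A L) : (g ∪ h).cl = g.cl ∪ h.cl := rfl

@[simp] lemma CSpace.union_Ty (c d : CSpace V A L) : (c ∪ d).Ty = c.Ty ∪ d.Ty := rfl
@[simp] lemma CSpace.union_le (c d : CSpace V A L) : (c ∪ d).le = c.le ∪ d.le := rfl
@[simp] lemma CSpace.union_C (c d : CSpace V A L) : (c ∪ d).C = c.C ∪ d.C := rfl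
@[simp] lemma CSpace.union_sig (c d : CSpace V A L) : (c ∪ d).sig = c.sig ∪ d.sig := rfl
@[simp] lemma CSpace.union_G (c d : CSpace V A L) : (c ∪ d).G = c.G ∪ d.G := rfl

lemma PreGraph.ext' {g h : PreGraph V A L} (e1 : g.Tk = h.Tk) (e2 : g.Cf = h.Cf)
    (e3 : g.Arr = h.Arr) (e4 : g.inc = h.inc) (e5 : g.ia = h.ia) (e6 : g.tl = h.tl)
    (e7 : g.cl = h.cl) : g = h := by
  cases g; cases h; simp_all

lemma fn_uniq {α β : Type*} {R : Set (α × β)} {D : Set α} (h : IsFunctionOn R D)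
    {x : α} {y y' : β} (hy : (x, y) ∈ R) (hy' : (x, y') ∈ R) : y = y' := by
  obtain ⟨z, _, hu⟩ := h.2 x (h.1 _ hy)
  exact (hu y hy).trans (hu y' hy').symm

lemma fn_comm {α β : Type*} {R1 R2 : Set (α × β)} {D1 D2 : Set α}
    (h : IsFunctionOn (R1 ∪ R2) (D1 ∪ D2)) : IsFunctionOn (R2 ∪ R1) (D2 ∪ D1) := by
  rw [Set.union_comm R2, Set.union_comm D2]; exact h

lemma localize {α β : Type*} {R1 R2 : Set (α × β)} {D1 D2 : Set α}
    (h1 : IsFunctionOn R1 D1) (h12 : IsFunctionOn (R1 ∪ R2) (D1 ∪ D2))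
    {a : α} {q : β} (ha : a ∈ D1) (hq : (a, q) ∈ R2) : (a, q) ∈ R1 := by
  obtain ⟨q', hq', _⟩ := h1.2 a ha
  have : q = q' := fn_uniq h12 (Set.mem_union_right _ hq) (Set.mem_union_left _ hq')
  exact this ▸ hq'

lemma fn_union3 {α β : Type*} {R1 R2 R3 : Set (α × β)} {D1 D2 D3 : Set α}
    (h1 : IsFunctionOn R1 D1) (h2 : IsFunctionOn R2 D2) (h3 : IsFunctionOn R3 D3)
    (h12 : IsFunctionOn (R1 ∪ R2) (D1 ∪ D2)) (h13 : IsFunctionOn (R1 ∪ R3) (D1 ∪ D3))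
    (h23 : IsFunctionOn (R2 ∪ R3) (D2 ∪ D3)) :
    IsFunctionOn ((R1 ∪ R2) ∪ R3) ((D1 ∪ D2) ∪ D3) := by
  have key : ∀ (x : α) (y y' : β), (x, y) ∈ (R1 ∪ R2) ∪ R3 → (x, y') ∈ (R1 ∪ R2) ∪ R3 →
      y = y' := by
    rintro x y y' ((a | a) | a) ((b | b) | b)
    exacts [fn_uniq h1 a b, fn_uniq h12 (Or.inl a) (Or.inr b),
      fn_uniq h13 (Or.inl a) (Or.inr b), fn_uniq h12 (Or.inr a) (Or.inl b),
      fn_uniq h2 a b, fn_uniq h23 (Or.inl a) (Or.inr b),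
      fn_uniq h13 (Or.inr a) (Or.inl b), fn_uniq h23 (Or.inr a) (Or.inl b),
      fn_uniq h3 a b]
  constructor
  · rintro p ((hp | hp) | hp)
    · exact Or.inl (Or.inl (h1.1 p hp))
    · exact Or.inl (Or.inr (h2.1 p hp))
    · exact Or.inr (h3.1 p hp)
  · rintro x ((hx | hx) | hx)
    · obtain ⟨y, hy, -⟩ := h1.2 x hx
      exact ⟨y, Or.inl (Or.inl hy), fun z hz => key x z y hz (Or.inl (Or.inl hy))⟩
    · obtain ⟨y, hy, -⟩ := h2.2 x hx
      exact ⟨y, Or.inl (Or.inr hy), fun z hz => key x z y hz (Or.inl (Or.inr hy))⟩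
    · obtain ⟨y, hy, -⟩ := h3.2 x hx
      exact ⟨y, Or.inr hy, fun z hz => key x z y hz (Or.inr hy)⟩

lemma disj3 {α : Type*} {s1 s2 s3 t1 t2 t3 : Set α}
    (h12 : Disjoint (s1 ∪ s2) (t1 ∪ t2)) (h13 : Disjoint (s1 ∪ s3) (t1 ∪ t3))
    (h23 : Disjoint (s2 ∪ s3) (t2 ∪ t3)) :
    Disjoint ((s1 ∪ s2) ∪ s3) ((t1 ∪ t2) ∪ t3) := by
  rw [Set.disjoint_left] at h12 h13 h23 ⊢
  rintro a ((ha | ha) | ha) ((hb | hb) | hb)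
  exacts [h12 (Or.inl ha) (Or.inl hb), h12 (Or.inl ha) (Or.inr hb),
    h13 (Or.inl ha) (Or.inr hb), h12 (Or.inr ha) (Or.inl hb),
    h12 (Or.inr ha) (Or.inr hb), h23 (Or.inl ha) (Or.inr hb),
    h13 (Or.inr ha) (Or.inl hb), h23 (Or.inr ha) (Or.inl hb),
    h23 (Or.inr ha) (Or.inr hb)]

lemma po_union3 {U : Type*} {T1 T2 T3 : Set U} {l1 l2 l3 : Set (U × U)}
    (h1 : IsPartialOrderOn T1 l1) (h2 : IsPartialOrderOn T2 l2)
    (h3 : IsPartialOrderOn T3 l3)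
    (h12 : IsPartialOrderOn (T1 ∪ T2) (l1 ∪ l2))
    (h13 : IsPartialOrderOn (T1 ∪ T3) (l1 ∪ l3))
    (h23 : IsPartialOrderOn (T2 ∪ T3) (l2 ∪ l3)) :
    IsPartialOrderOn ((T1 ∪ T2) ∪ T3) ((l1 ∪ l2) ∪ l3) := by
  refine ⟨?_, ?_, ?_, ?_⟩
  · rintro p ((hp | hp) | hp)
    · exact ⟨Or.inl (Or.inl (h1.1 p hp).1), Or.inl (Or.inl (h1.1 p hp).2)⟩
    · exact ⟨Or.inl (Or.inr (h2.1 p hp).1), Or.inl (Or.inr (h2.1 p hp).2)⟩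
    · exact ⟨Or.inr (h3.1 p hp).1, Or.inr (h3.1 p hp).2⟩
  · rintro τ ((hτ | hτ) | hτ)
    exacts [Or.inl (Or.inl (h1.2.1 τ hτ)), Or.inl (Or.inr (h2.2.1 τ hτ)),
      Or.inr (h3.2.1 τ hτ)]
  · rintro a b ((hab | hab) | hab) ((hba | hba) | hba)
    exacts [h1.2.2.1 a b hab hba,
      h12.2.2.1 a b (Or.inl hab) (Or.inr hba),
      h13.2.2.1 a b (Or.inl hab) (Or.inr hba),
      h12.2.2.1 a b (Or.inr hab) (Or.inl hba),
      h2.2.2.1 a b hab hba,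
      h23.2.2.1 a b (Or.inl hab) (Or.inr hba),
      h13.2.2.1 a b (Or.inr hab) (Or.inl hba),
      h23.2.2.1 a b (Or.inr hab) (Or.inl hba),
      h3.2.2.1 a b hab hba]
  · rintro a b c ((hab | hab) | hab) ((hbc | hbc) | hbc)
    · exact Or.inl (Or.inl (h1.2.2.2 a b c hab hbc))
    · exact Or.inl (h12.2.2.2 a b c (Or.inl hab) (Or.inr hbc))
    · rcases h13.2.2.2 a b c (Or.inl hab) (Or.inr hbc) with h | h
      exacts [Or.inl (Or.inl h), Or.inr h]
    · exact Or.inl (h12.2.2.2 a b c (Or.inr hab) (Or.inl hbc))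
    · exact Or.inl (Or.inr (h2.2.2.2 a b c hab hbc))
    · rcases h23.2.2.2 a b c (Or.inl hab) (Or.inr hbc) with h | h
      exacts [Or.inl (Or.inr h), Or.inr h]
    · rcases h13.2.2.2 a b c (Or.inr hab) (Or.inl hbc) with h | h
      exacts [Or.inl (Or.inl h), Or.inr h]
    · rcases h23.2.2.2 a b c (Or.inr hab) (Or.inl hbc) with h | h
      exacts [Or.inl (Or.inr h), Or.inr h]
    · exact Or.inr (h3.2.2.2 a b c hab hbc)

lemma subgraph_union_left (g h : PreGraph V A L) : g.Subgraph (g ∪ h) :=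
  ⟨Set.subset_union_left, Set.subset_union_left, Set.subset_union_left,
    Set.subset_union_left, Set.subset_union_left, Set.subset_union_left,
    Set.subset_union_left⟩

lemma subgraph_union_right (g h : PreGraph V A L) : h.Subgraph (g ∪ h) :=
  ⟨Set.subset_union_right, Set.subset_union_right, Set.subset_union_right,
    Set.subset_union_right, Set.subset_union_right, Set.subset_union_right,
    Set.subset_union_right⟩

lemma subgraph_trans {g h k : PreGraph V A L} (h1 : g.Subgraph h) (h2 : h.Subgraph k) :
    g.Subgraph k :=
  ⟨h1.1.trans h2.1, h1.2.1.trans h2.2.1, h1.2.2.1.trans h2.2.2.1,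
    h1.2.2.2.1.trans h2.2.2.2.1, h1.2.2.2.2.1.trans h2.2.2.2.2.1,
    h1.2.2.2.2.2.1.trans h2.2.2.2.2.2.1, h1.2.2.2.2.2.2.trans h2.2.2.2.2.2.2⟩

lemma config_mono {le le' : Set (L × L)} (hle : le ⊆ le') {g : PreGraph V A L} {u : V}
    {c : L} {ins : List L} {out : L} (h : IsConfiguration le g u c ins out) :
    IsConfiguration le' g u c ins out := by
  obtain ⟨e1, e2, e3, e4, e5, e6, ars, e7, e8, e9⟩ := h
  refine ⟨e1, e2, e3, e4, e5, ?_, ars, e7, e8, ?_⟩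
  · intro a0 ha0 w hw
    obtain ⟨hia, σ, hσ, hl⟩ := e6 a0 ha0 w hw
    exact ⟨hia, σ, hσ, hle hl⟩
  · intro i a τ hi hτ
    obtain ⟨w, σ, f1, f2, f3⟩ := e9 i a τ hi hτ
    exact ⟨w, σ, f1, f2, hle f3⟩

lemma list_eq_of_idx {ars ars' : List A} (R : Set (A × ℕ)) (D : Set A)
    (hfn : IsFunctionOn R D)
    (hlen : ars.length = ars'.length)
    (hD : ∀ a ∈ ars, a ∈ D)
    (hidx : ∀ (i : ℕ) (a : A), ars[i]? = some a → (a, i + 1) ∈ R)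
    (hidx' : ∀ (i : ℕ) (a : A), ars'[i]? = some a → (a, i + 1) ∈ R)
    (hsub : ∀ a ∈ ars, a ∈ ars') : ars = ars' := by
  apply List.ext_getElem?
  intro i
  cases h : ars[i]? with
  | none =>
    have hle : ars.length ≤ i := by
      by_contra hcon
      push_neg at hcon
      rw [List.getElem?_eq_getElem hcon] at h
      exact Option.some_ne_none _ h
    exact (List.getElem?_eq_none (hlen ▸ hle)).symm
  | some a =>
    have hmem : a ∈ ars := List.mem_iff_getElem?.mpr ⟨i, h⟩
    obtain ⟨j, hj⟩ := List.mem_iff_getElem?.mp (hsub a hmem)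
    have : i + 1 = j + 1 := fn_uniq hfn (hidx i a h) (hidx' j a hj)
    have hij : i = j := by omega
    rw [← hij] at hj
    exact hj.symm

lemma nh_eq {g h : PreGraph V A L} (hg : IsGraph g) (hh : IsGraph h)
    (hsub : h.Subgraph g) {u : V} (hu : u ∈ h.Cf)
    (harr : ∀ a ∈ g.Arr, (∃ v, (a, (v, u)) ∈ g.inc ∨ (a, (u, v)) ∈ g.inc) → a ∈ h.Arr) :
    g.Nh u = h.Nh u := by
  obtain ⟨hTks, hCfs, hArrs, hincs, hias, htls, hcls⟩ := hsub
  have inc_agree : ∀ a ∈ h.Arr, ∀ q, (a, q) ∈ g.inc → (a, q) ∈ h.inc := by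
    intro a ha q hq
    obtain ⟨q', hq', _⟩ := hh.2.1.2 a ha
    exact (fn_uniq hg.2.1 hq (hincs hq')) ▸ hq'
  have ia_agree : ∀ a ∈ h.Arr, ∀ n : ℕ, (a, n) ∈ g.ia → (a, n) ∈ h.ia := by
    intro a ha n hn
    obtain ⟨n', hn', _⟩ := hh.2.2.2.1.2 a ha
    exact (fn_uniq hg.2.2.2.1 hn (hias hn')) ▸ hn'
  have tl_agree : ∀ x ∈ h.Tk, ∀ τ, (x, τ) ∈ g.tl → (x, τ) ∈ h.tl := by
    intro x hx τ hτ
    obtain ⟨τ', hτ', _⟩ := hh.2.2.2.2.1.2 x hx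
    exact (fn_uniq hg.2.2.2.2.1 hτ (htls hτ')) ▸ hτ'
  have cl_agree : ∀ x ∈ h.Cf, ∀ c, (x, c) ∈ g.cl → (x, c) ∈ h.cl := by
    intro x hx c hc
    obtain ⟨c', hc', _⟩ := hh.2.2.2.2.2.2 x hx
    exact (fn_uniq hg.2.2.2.2.2 hc (hcls hc')) ▸ hc'
  have hincident : g.incidentArrows u = h.incidentArrows u := by
    ext a
    simp only [PreGraph.incidentArrows, Set.mem_setOf_eq]
    constructor
    · rintro ⟨ha, v, hv | hv⟩
      · have ha' := harr a ha ⟨v, Or.inl hv⟩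
        exact ⟨ha', v, Or.inl (inc_agree a ha' _ hv)⟩
      · have ha' := harr a ha ⟨v, Or.inr hv⟩
        exact ⟨ha', v, Or.inr (inc_agree a ha' _ hv)⟩
    · rintro ⟨ha, v, hv | hv⟩
      exacts [⟨hArrs ha, v, Or.inl (hincs hv)⟩, ⟨hArrs ha, v, Or.inr (hincs hv)⟩]
  have hadj : g.adjTo u = h.adjTo u := by
    ext x
    simp only [PreGraph.adjTo, Set.mem_union, Set.mem_singleton_iff, Set.mem_setOf_eq]
    constructor
    · rintro (rfl | ⟨a, ha, hv | hv⟩)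
      · exact Or.inl rfl
      · have ha' := harr a ha ⟨x, Or.inl hv⟩
        exact Or.inr ⟨a, ha', Or.inl (inc_agree a ha' _ hv)⟩
      · have ha' := harr a ha ⟨x, Or.inr hv⟩
        exact Or.inr ⟨a, ha', Or.inr (inc_agree a ha' _ hv)⟩
    · rintro (rfl | ⟨a, ha, hv | hv⟩)
      · exact Or.inl rfl
      · exact Or.inr ⟨a, hArrs ha, Or.inl (hincs hv)⟩
      · exact Or.inr ⟨a, hArrs ha, Or.inr (hincs hv)⟩
  have adj_tk : ∀ x, x ∈ h.adjTo u → x ∈ g.Tk → x ∈ h.Tk := by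
    intro x hx hxg
    simp only [PreGraph.adjTo, Set.mem_union, Set.mem_singleton_iff, Set.mem_setOf_eq] at hx
    rcases hx with rfl | ⟨a, ha, hv | hv⟩
    · exact absurd (hCfs hu) (Set.disjoint_left.mp hg.1 hxg)
    · rcases hh.2.2.1 a x u hv with ⟨hx', _⟩ | ⟨hx', _⟩
      · exact hx'
      · exact absurd (hCfs hx') (Set.disjoint_left.mp hg.1 hxg)
    · rcases hh.2.2.1 a u x hv with ⟨_, hx'⟩ | ⟨_, hx'⟩
      · exact absurd (hCfs hx') (Set.disjoint_left.mp hg.1 hxg)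
      · exact hx'
  have adj_cf : ∀ x, x ∈ h.adjTo u → x ∈ g.Cf → x ∈ h.Cf := by
    intro x hx hxg
    simp only [PreGraph.adjTo, Set.mem_union, Set.mem_singleton_iff, Set.mem_setOf_eq] at hx
    rcases hx with rfl | ⟨a, ha, hv | hv⟩
    · exact hu
    · rcases hh.2.2.1 a x u hv with ⟨hx', _⟩ | ⟨hx', _⟩
      · exact absurd hxg (Set.disjoint_left.mp hg.1 (hTks hx'))
      · exact hx'
    · rcases hh.2.2.1 a u x hv with ⟨_, hx'⟩ | ⟨_, hx'⟩
      · exact hx'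
      · exact absurd hxg (Set.disjoint_left.mp hg.1 (hTks hx'))
  refine PreGraph.ext' ?_ ?_ ?_ ?_ ?_ ?_ ?_
  · show g.Tk ∩ g.adjTo u = h.Tk ∩ h.adjTo u
    rw [hadj]
    ext x
    constructor
    · rintro ⟨hxg, hxa⟩
      exact ⟨adj_tk x hxa hxg, hxa⟩
    · rintro ⟨hxh, hxa⟩
      exact ⟨hTks hxh, hxa⟩
  · show g.Cf ∩ g.adjTo u = h.Cf ∩ h.adjTo u
    rw [hadj]
    ext x
    constructor
    · rintro ⟨hxg, hxa⟩
      exact ⟨adj_cf x hxa hxg, hxa⟩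
    · rintro ⟨hxh, hxa⟩
      exact ⟨hCfs hxh, hxa⟩
  · show g.Arr ∩ g.incidentArrows u = h.Arr ∩ h.incidentArrows u
    rw [hincident]
    ext a
    constructor
    · rintro ⟨-, hi⟩
      exact ⟨hi.1, hi⟩
    · rintro ⟨hah, hi⟩
      exact ⟨hArrs hah, hi⟩
  · show {q | q ∈ g.inc ∧ q.1 ∈ g.incidentArrows u} = {q | q ∈ h.inc ∧ q.1 ∈ h.incidentArrows u}
    rw [hincident]
    ext ⟨a, q⟩
    simp only [Set.mem_setOf_eq]
    constructor
    · rintro ⟨hq, hi⟩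
      exact ⟨inc_agree a hi.1 q hq, hi⟩
    · rintro ⟨hq, hi⟩
      exact ⟨hincs hq, hi⟩
  · show {q | q ∈ g.ia ∧ q.1 ∈ g.incidentArrows u} = {q | q ∈ h.ia ∧ q.1 ∈ h.incidentArrows u}
    rw [hincident]
    ext ⟨a, n⟩
    simp only [Set.mem_setOf_eq]
    constructor
    · rintro ⟨hq, hi⟩
      exact ⟨ia_agree a hi.1 n hq, hi⟩
    · rintro ⟨hq, hi⟩
      exact ⟨hias hq, hi⟩
  · show {q | q ∈ g.tl ∧ q.1 ∈ g.adjTo u} = {q | q ∈ h.tl ∧ q.1 ∈ h.adjTo u}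
    rw [hadj]
    ext ⟨x, τ⟩
    simp only [Set.mem_setOf_eq]
    constructor
    · rintro ⟨hq, hx⟩
      have hxTk : x ∈ g.Tk := hg.2.2.2.2.1.1 _ hq
      exact ⟨tl_agree x (adj_tk x hx hxTk) τ hq, hx⟩
    · rintro ⟨hq, hx⟩
      exact ⟨htls hq, hx⟩
  · show {q | q ∈ g.cl ∧ q.1 ∈ g.adjTo u} = {q | q ∈ h.cl ∧ q.1 ∈ h.adjTo u}
    rw [hadj]
    ext ⟨x, c⟩
    simp only [Set.mem_setOf_eq]
    constructor
    · rintro ⟨hq, hx⟩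
      have hxCf : x ∈ g.Cf := hg.2.2.2.2.2.1 _ hq
      exact ⟨cl_agree x (adj_cf x hx hxCf) c hq, hx⟩
    · rintro ⟨hq, hx⟩
      exact ⟨hcls hq, hx⟩

lemma arrow_local (W X : CSpace V A L) (hW : IsCSpace W) (hX : IsCSpace X)
    (hsub : X.G.Subgraph W.G) (hC : X.C ⊆ W.C) (hsig : X.sig ⊆ W.sig)
    {u : V} {a : A} (hu : u ∈ X.G.Cf) (ha : a ∈ W.G.Arr)
    (hv : ∃ v, (a, (v, u)) ∈ W.G.inc ∨ (a, (u, v)) ∈ W.G.inc) : a ∈ X.G.Arr := by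
  obtain ⟨v, hv⟩ := hv
  have hWsg := hW.2.2.2.2
  have hXsg := hX.2.2.2.2
  obtain ⟨cW, insW, outW, hclW, hcW, hsW, hconfW⟩ := hWsg.2.2 u (hsub.2.1 hu)
  obtain ⟨cX, insX, outX, hclX, hcX, hsX, hconfX⟩ := hXsg.2.2 u hu
  have hc : cX = cW := fn_uniq hWsg.1.2.2.2.2.2 (hsub.2.2.2.2.2.2 hclX) hclW
  subst hc
  have hio : (insX, outX) = (insW, outW) := fn_uniq hW.2.2.1 (hsig hsX) hsW
  have hins : insX = insW := congrArg Prod.fst hio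
  obtain ⟨-, -, -, -, houtW, -, arsW, harsW, hlenW, -⟩ := hconfW
  obtain ⟨-, -, -, -, houtX, -, arsX, harsX, hlenX, -⟩ := hconfX
  have memW : ∀ x ∈ arsX, x ∈ arsW := by
    intro x hx
    obtain ⟨hxArr, w, hxinc⟩ := (harsX.2.1 x).mp hx
    have hxX : x ∈ X.G.Arr := hxArr.1
    have hxW : x ∈ W.G.Arr := hsub.2.2.1 hxX
    have hxincW : (x, (w, u)) ∈ W.G.inc := hsub.2.2.2.1 hxinc.1
    exact (harsW.2.1 x).mpr ⟨⟨hxW, ⟨hxW, w, Or.inl hxincW⟩⟩, w,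
      ⟨hxincW, ⟨hxW, w, Or.inl hxincW⟩⟩⟩
  have hae : arsX = arsW := by
    refine list_eq_of_idx W.G.ia W.G.Arr hWsg.1.2.2.2.1 ?_ ?_ ?_ ?_ memW
    · rw [hlenX, hins, ← hlenW]
    · intro x hx
      exact hsub.2.2.1 ((harsX.2.1 x).mp hx).1.1
    · intro i x hx
      exact hsub.2.2.2.2.1 ((harsX.2.2 i x hx).1)
    · intro i x hx
      exact (harsW.2.2 i x hx).1
  rcases hv with hv | hv
  · have haW : a ∈ arsW :=
      (harsW.2.1 a).mpr ⟨⟨ha, ⟨ha, v, Or.inl hv⟩⟩, v, ⟨hv, ⟨ha, v, Or.inl hv⟩⟩⟩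
    rw [← hae] at haW
    exact ((harsX.2.1 a).mp haW).1.1
  · obtain ⟨a0, -, huniq⟩ := houtW
    obtain ⟨a0X, ⟨hX1, w, hX2⟩, -⟩ := houtX
    have e1 : a = a0 := huniq a ⟨⟨ha, ⟨ha, v, Or.inr hv⟩⟩, v, ⟨hv, ⟨ha, v, Or.inr hv⟩⟩⟩
    have hX1' : a0X ∈ W.G.Arr := hsub.2.2.1 hX1.1
    have hWmem : (a0X, (u, w)) ∈ W.G.inc := hsub.2.2.2.1 hX2.1
    have e2 : a0X = a0 :=
      huniq a0X ⟨⟨hX1', ⟨hX1', w, Or.inr hWmem⟩⟩, w, ⟨hWmem, ⟨hX1', w, Or.inr hWmem⟩⟩⟩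
    rw [e1, ← e2]
    exact hX1.1

end Aux

/-- the union of pairwise compatible construction spaces with a third compatible
construction space is a construction space. -/
theorem union_of_pairwise_compatible_cspaces {V A L : Type*}
    (Cs1 Cs2 Cs3 : CSpace V A L)
    (h1 : IsCSpace Cs1) (h2 : IsCSpace Cs2) (h3 : IsCSpace Cs3)
    (h12 : IsCSpace (Cs1 ∪ Cs2)) (h13 : IsCSpace (Cs1 ∪ Cs3))
    (h23 : IsCSpace (Cs2 ∪ Cs3)) :
    IsCSpace ((Cs1 ∪ Cs2) ∪ Cs3) := by
  have g1 : IsGraph Cs1.G := h1.2.2.2.2.1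
  have g2 : IsGraph Cs2.G := h2.2.2.2.2.1
  have g3 : IsGraph Cs3.G := h3.2.2.2.2.1
  have g12 : IsGraph (Cs1 ∪ Cs2).G := h12.2.2.2.2.1
  have g13 : IsGraph (Cs1 ∪ Cs3).G := h13.2.2.2.2.1
  have g23 : IsGraph (Cs2 ∪ Cs3).G := h23.2.2.2.2.1
  have hG : IsGraph ((Cs1 ∪ Cs2) ∪ Cs3).G := by
    refine ⟨disj3 g12.1 g13.1 g23.1,
      fn_union3 g1.2.1 g2.2.1 g3.2.1 g12.2.1 g13.2.1 g23.2.1, ?_,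
      fn_union3 g1.2.2.2.1 g2.2.2.2.1 g3.2.2.2.1 g12.2.2.2.1 g13.2.2.2.1 g23.2.2.2.1,
      fn_union3 g1.2.2.2.2.1 g2.2.2.2.2.1 g3.2.2.2.2.1 g12.2.2.2.2.1 g13.2.2.2.2.1
        g23.2.2.2.2.1,
      fn_union3 g1.2.2.2.2.2 g2.2.2.2.2.2 g3.2.2.2.2.2 g12.2.2.2.2.2 g13.2.2.2.2.2
        g23.2.2.2.2.2⟩
    rintro a v w ((hq | hq) | hq)
    · rcases g1.2.2.1 a v w hq with ⟨hv, hw⟩ | ⟨hv, hw⟩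
      exacts [Or.inl ⟨Or.inl (Or.inl hv), Or.inl (Or.inl hw)⟩,
        Or.inr ⟨Or.inl (Or.inl hv), Or.inl (Or.inl hw)⟩]
    · rcases g2.2.2.1 a v w hq with ⟨hv, hw⟩ | ⟨hv, hw⟩
      exacts [Or.inl ⟨Or.inl (Or.inr hv), Or.inl (Or.inr hw)⟩,
        Or.inr ⟨Or.inl (Or.inr hv), Or.inl (Or.inr hw)⟩]
    · rcases g3.2.2.1 a v w hq with ⟨hv, hw⟩ | ⟨hv, hw⟩
      exacts [Or.inl ⟨Or.inr hv, Or.inr hw⟩, Or.inr ⟨Or.inr hv, Or.inr hw⟩]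
  have sub1 : Cs1.G.Subgraph ((Cs1 ∪ Cs2) ∪ Cs3).G :=
    subgraph_trans (subgraph_union_left Cs1.G Cs2.G)
      (subgraph_union_left (Cs1 ∪ Cs2).G Cs3.G)
  have sub2 : Cs2.G.Subgraph ((Cs1 ∪ Cs2) ∪ Cs3).G :=
    subgraph_trans (subgraph_union_right Cs1.G Cs2.G)
      (subgraph_union_left (Cs1 ∪ Cs2).G Cs3.G)
  have sub3 : Cs3.G.Subgraph ((Cs1 ∪ Cs2) ∪ Cs3).G :=
    subgraph_union_right (Cs1 ∪ Cs2).G Cs3.G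
  have loc1 : ∀ (a : A) (q : V × V), a ∈ Cs1.G.Arr →
      (a, q) ∈ ((Cs1 ∪ Cs2) ∪ Cs3).G.inc → (a, q) ∈ Cs1.G.inc := by
    rintro a q ha ((hq | hq) | hq)
    · exact hq
    · exact localize g1.2.1 g12.2.1 ha hq
    · exact localize g1.2.1 g13.2.1 ha hq
  have loc2 : ∀ (a : A) (q : V × V), a ∈ Cs2.G.Arr →
      (a, q) ∈ ((Cs1 ∪ Cs2) ∪ Cs3).G.inc → (a, q) ∈ Cs2.G.inc := by
    rintro a q ha ((hq | hq) | hq)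
    · exact localize g2.2.1 (fn_comm g12.2.1) ha hq
    · exact hq
    · exact localize g2.2.1 g23.2.1 ha hq
  have loc3 : ∀ (a : A) (q : V × V), a ∈ Cs3.G.Arr →
      (a, q) ∈ ((Cs1 ∪ Cs2) ∪ Cs3).G.inc → (a, q) ∈ Cs3.G.inc := by
    rintro a q ha ((hq | hq) | hq)
    · exact localize g3.2.1 (fn_comm g13.2.1) ha hq
    · exact localize g3.2.1 (fn_comm g23.2.1) ha hq
    · exact hq
  have key : ∀ (X : CSpace V A L), IsCSpace X →
      X.G.Subgraph ((Cs1 ∪ Cs2) ∪ Cs3).G →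
      X.le ⊆ ((Cs1 ∪ Cs2) ∪ Cs3).le → X.C ⊆ ((Cs1 ∪ Cs2) ∪ Cs3).C →
      X.sig ⊆ ((Cs1 ∪ Cs2) ∪ Cs3).sig →
      ∀ u ∈ X.G.Cf,
        (∀ a ∈ ((Cs1 ∪ Cs2) ∪ Cs3).G.Arr,
          (∃ v, (a, (v, u)) ∈ ((Cs1 ∪ Cs2) ∪ Cs3).G.inc ∨
                (a, (u, v)) ∈ ((Cs1 ∪ Cs2) ∪ Cs3).G.inc) → a ∈ X.G.Arr) →
        ∃ c ins out, (u, c) ∈ ((Cs1 ∪ Cs2) ∪ Cs3).G.cl ∧ c ∈ ((Cs1 ∪ Cs2) ∪ Cs3).C ∧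
          (c, (ins, out)) ∈ ((Cs1 ∪ Cs2) ∪ Cs3).sig ∧
          IsConfiguration ((Cs1 ∪ Cs2) ∪ Cs3).le (((Cs1 ∪ Cs2) ∪ Cs3).G.Nh u) u c ins
            out := by
    intro X hX hsub hle hC hsigs u hu harr
    obtain ⟨c, ins, out, hcl, hc, hs, hconf⟩ := hX.2.2.2.2.2.2 u hu
    refine ⟨c, ins, out, hsub.2.2.2.2.2.2 hcl, hC hc, hsigs hs, ?_⟩
    rw [nh_eq hG hX.2.2.2.2.1 hsub hu harr]
    exact config_mono hle hconf
  refine ⟨po_union3 h1.1 h2.1 h3.1 h12.1 h13.1 h23.1,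
    disj3 h12.2.1 h13.2.1 h23.2.1,
    fn_union3 h1.2.2.1 h2.2.2.1 h3.2.2.1 h12.2.2.1 h13.2.2.1 h23.2.2.1, ?_, hG, ?_, ?_⟩
  · rintro c ins out ((hs | hs) | hs)
    · obtain ⟨hne, hty, hout⟩ := h1.2.2.2.1 c ins out hs
      exact ⟨hne, fun τ hτ => Or.inl (Or.inl (hty τ hτ)), Or.inl (Or.inl hout)⟩
    · obtain ⟨hne, hty, hout⟩ := h2.2.2.2.1 c ins out hs
      exact ⟨hne, fun τ hτ => Or.inl (Or.inr (hty τ hτ)), Or.inl (Or.inr hout)⟩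
    · obtain ⟨hne, hty, hout⟩ := h3.2.2.2.1 c ins out hs
      exact ⟨hne, fun τ hτ => Or.inr (hty τ hτ), Or.inr hout⟩
  · rintro x τ ((hq | hq) | hq)
    exacts [Or.inl (Or.inl (h1.2.2.2.2.2.1 x τ hq)),
      Or.inl (Or.inr (h2.2.2.2.2.2.1 x τ hq)), Or.inr (h3.2.2.2.2.2.1 x τ hq)]
  · intro u hu
    rcases hu with (hu | hu) | hu
    · refine key Cs1 h1 sub1 (fun _ hx => Or.inl (Or.inl hx))
        (fun _ hx => Or.inl (Or.inl hx)) (fun _ hx => Or.inl (Or.inl hx)) u hu ?_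
      rintro a ha ⟨v, hvp⟩
      rcases ha with (ha | ha) | ha
      · exact ha
      · have hvj : (a, (v, u)) ∈ Cs2.G.inc ∨ (a, (u, v)) ∈ Cs2.G.inc := by
          rcases hvp with hvp | hvp
          exacts [Or.inl (loc2 a _ ha hvp), Or.inr (loc2 a _ ha hvp)]
        exact arrow_local (Cs1 ∪ Cs2) Cs1 h12 h1 (subgraph_union_left _ _)
          Set.subset_union_left Set.subset_union_left hu (Or.inr ha)
          ⟨v, hvj.imp (fun h => Or.inr h) (fun h => Or.inr h)⟩
      · have hvj : (a, (v, u)) ∈ Cs3.G.inc ∨ (a, (u, v)) ∈ Cs3.G.inc := by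
          rcases hvp with hvp | hvp
          exacts [Or.inl (loc3 a _ ha hvp), Or.inr (loc3 a _ ha hvp)]
        exact arrow_local (Cs1 ∪ Cs3) Cs1 h13 h1 (subgraph_union_left _ _)
          Set.subset_union_left Set.subset_union_left hu (Or.inr ha)
          ⟨v, hvj.imp (fun h => Or.inr h) (fun h => Or.inr h)⟩
    · refine key Cs2 h2 sub2 (fun _ hx => Or.inl (Or.inr hx))
        (fun _ hx => Or.inl (Or.inr hx)) (fun _ hx => Or.inl (Or.inr hx)) u hu ?_
      rintro a ha ⟨v, hvp⟩
      rcases ha with (ha | ha) | ha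
      · have hvj : (a, (v, u)) ∈ Cs1.G.inc ∨ (a, (u, v)) ∈ Cs1.G.inc := by
          rcases hvp with hvp | hvp
          exacts [Or.inl (loc1 a _ ha hvp), Or.inr (loc1 a _ ha hvp)]
        exact arrow_local (Cs1 ∪ Cs2) Cs2 h12 h2 (subgraph_union_right _ _)
          Set.subset_union_right Set.subset_union_right hu (Or.inl ha)
          ⟨v, hvj.imp (fun h => Or.inl h) (fun h => Or.inl h)⟩
      · exact ha
      · have hvj : (a, (v, u)) ∈ Cs3.G.inc ∨ (a, (u, v)) ∈ Cs3.G.inc := by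
          rcases hvp with hvp | hvp
          exacts [Or.inl (loc3 a _ ha hvp), Or.inr (loc3 a _ ha hvp)]
        exact arrow_local (Cs2 ∪ Cs3) Cs2 h23 h2 (subgraph_union_left _ _)
          Set.subset_union_left Set.subset_union_left hu (Or.inr ha)
          ⟨v, hvj.imp (fun h => Or.inr h) (fun h => Or.inr h)⟩
    · refine key Cs3 h3 sub3 (fun _ hx => Or.inr hx) (fun _ hx => Or.inr hx)
        (fun _ hx => Or.inr hx) u hu ?_
      rintro a ha ⟨v, hvp⟩
      rcases ha with (ha | ha) | ha
      · have hvj : (a, (v, u)) ∈ Cs1.G.inc ∨ (a, (u, v)) ∈ Cs1.G.inc := by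
          rcases hvp with hvp | hvp
          exacts [Or.inl (loc1 a _ ha hvp), Or.inr (loc1 a _ ha hvp)]
        exact arrow_local (Cs1 ∪ Cs3) Cs3 h13 h3 (subgraph_union_right _ _)
          Set.subset_union_right Set.subset_union_right hu (Or.inl ha)
          ⟨v, hvj.imp (fun h => Or.inl h) (fun h => Or.inl h)⟩
      · have hvj : (a, (v, u)) ∈ Cs2.G.inc ∨ (a, (u, v)) ∈ Cs2.G.inc := by
          rcases hvp with hvp | hvp
          exacts [Or.inl (loc2 a _ ha hvp), Or.inr (loc2 a _ ha hvp)]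
        exact arrow_local (Cs2 ∪ Cs3) Cs3 h23 h3 (subgraph_union_right _ _)
          Set.subset_union_right Set.subset_union_right hu (Or.inl ha)
          ⟨v, hvj.imp (fun h => Or.inl h) (fun h => Or.inl h)⟩
      · exact ha

end RST
end

section
/- Let R = (Gs, Es, Is) be a representational system. Then the componentwise union Gs ∪ Es ∪ Is (the universal space of R) is a construction space. -/
namespace RST

variable {V A L : Type*}

/-! ### Auxiliary material for the proof of `universal_space_is_cspace` -/

section Aux

variable {V A L : Type*}

lemma mem_pair_cases3 {α : Type*} {s1 s2 s3 : Set α} {x y : α}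
    (hx : x ∈ (s1 ∪ s2) ∪ s3) (hy : y ∈ (s1 ∪ s2) ∪ s3) :
    (x ∈ s1 ∪ s2 ∧ y ∈ s1 ∪ s2) ∨ (x ∈ s1 ∪ s3 ∧ y ∈ s1 ∪ s3) ∨
      (x ∈ s2 ∪ s3 ∧ y ∈ s2 ∪ s3) := by
  simp only [Set.mem_union] at *
  tauto

lemma sub13' {α : Type*} {s1 s2 s3 : Set α} : s1 ∪ s3 ⊆ (s1 ∪ s2) ∪ s3 := by
  intro x hx
  rcases hx with h | h
  · exact Or.inl (Or.inl h)
  · exact Or.inr h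

lemma sub23' {α : Type*} {s1 s2 s3 : Set α} : s2 ∪ s3 ⊆ (s1 ∪ s2) ∪ s3 := by
  intro x hx
  rcases hx with h | h
  · exact Or.inl (Or.inr h)
  · exact Or.inr h

lemma isFunctionOn_union3 {α β : Type*} {R1 R2 R3 : Set (α × β)} {D1 D2 D3 : Set α}
    (h12 : IsFunctionOn (R1 ∪ R2) (D1 ∪ D2)) (h13 : IsFunctionOn (R1 ∪ R3) (D1 ∪ D3))
    (h23 : IsFunctionOn (R2 ∪ R3) (D2 ∪ D3)) :
    IsFunctionOn ((R1 ∪ R2) ∪ R3) ((D1 ∪ D2) ∪ D3) := by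
  constructor
  · rintro p (hp | hp)
    · rcases h12.1 p hp with h | h
      · exact Or.inl (Or.inl h)
      · exact Or.inl (Or.inr h)
    · rcases h13.1 p (Or.inr hp) with h | h
      · exact Or.inl (Or.inl h)
      · exact Or.inr h
  · intro x hx
    have key : ∀ y1 y2 : β, (x, y1) ∈ (R1 ∪ R2) ∪ R3 → (x, y2) ∈ (R1 ∪ R2) ∪ R3 → y1 = y2 := by
      intro y1 y2 hy1 hy2
      rcases mem_pair_cases3 hy1 hy2 with ⟨ha, hb⟩ | ⟨ha, hb⟩ | ⟨ha, hb⟩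
      · exact (h12.2 x (h12.1 _ ha)).unique ha hb
      · exact (h13.2 x (h13.1 _ ha)).unique ha hb
      · exact (h23.2 x (h23.1 _ ha)).unique ha hb
    have hex : ∃ y, (x, y) ∈ (R1 ∪ R2) ∪ R3 := by
      rcases hx with hx | hx
      · obtain ⟨y, hy, -⟩ := h12.2 x hx
        rcases hy with hy | hy
        · exact ⟨y, Or.inl (Or.inl hy)⟩
        · exact ⟨y, Or.inl (Or.inr hy)⟩
      · obtain ⟨y, hy, -⟩ := h13.2 x (Or.inr hx)
        rcases hy with hy | hy
        · exact ⟨y, Or.inl (Or.inl hy)⟩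
        · exact ⟨y, Or.inr hy⟩
    obtain ⟨y, hy⟩ := hex
    exact ⟨y, hy, fun z hz => key z y hz hy⟩

lemma mem_adjTo_self (g : PreGraph V A L) (u : V) : u ∈ g.adjTo u := Or.inl rfl

lemma mem_adjTo_of_inc_left {g : PreGraph V A L} {u v : V} {a : A}
    (ha : a ∈ g.Arr) (h : (a, (v, u)) ∈ g.inc) : v ∈ g.adjTo u :=
  Or.inr ⟨a, ha, Or.inl h⟩

lemma mem_adjTo_of_inc_right {g : PreGraph V A L} {u v : V} {a : A}
    (ha : a ∈ g.Arr) (h : (a, (u, v)) ∈ g.inc) : v ∈ g.adjTo u :=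
  Or.inr ⟨a, ha, Or.inr h⟩

lemma isGraph_nh {g : PreGraph V A L} (hg : IsGraph g) (u : V) : IsGraph (g.Nh u) := by
  obtain ⟨hdisj, hinc, hbi, hia, htl, hcl⟩ := hg
  refine ⟨?_, ?_, ?_, ?_, ?_, ?_⟩
  · exact Disjoint.mono Set.inter_subset_left Set.inter_subset_left hdisj
  · constructor
    · rintro q ⟨hq, hqa⟩
      exact ⟨hinc.1 q hq, hqa⟩
    · rintro a ⟨ha, haa⟩
      obtain ⟨y, hy, hyu⟩ := hinc.2 a ha
      exact ⟨y, ⟨hy, haa⟩, fun z hz => hyu z hz.1⟩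
  · rintro a v w ⟨hq, hqa⟩
    obtain ⟨haArr, v0, h0⟩ := hqa
    have hvw : v ∈ g.adjTo u ∧ w ∈ g.adjTo u := by
      rcases h0 with h0 | h0
      · have he := (hinc.2 a haArr).unique hq h0
        have h1 : v = v0 := congrArg Prod.fst he
        have h2 : w = u := congrArg Prod.snd he
        constructor
        · rw [h1]; exact mem_adjTo_of_inc_left haArr h0
        · rw [h2]; exact mem_adjTo_self g u
      · have he := (hinc.2 a haArr).unique hq h0
        have h1 : v = u := congrArg Prod.fst he
        have h2 : w = v0 := congrArg Prod.snd he
        constructor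
        · rw [h1]; exact mem_adjTo_self g u
        · rw [h2]; exact mem_adjTo_of_inc_right haArr h0
    rcases hbi a v w hq with ⟨hv, hw⟩ | ⟨hv, hw⟩
    · exact Or.inl ⟨⟨hv, hvw.1⟩, hw, hvw.2⟩
    · exact Or.inr ⟨⟨hv, hvw.1⟩, hw, hvw.2⟩
  · constructor
    · rintro q ⟨hq, hqa⟩
      exact ⟨hia.1 q hq, hqa⟩
    · rintro a ⟨ha, haa⟩
      obtain ⟨y, hy, hyu⟩ := hia.2 a ha
      exact ⟨y, ⟨hy, haa⟩, fun z hz => hyu z hz.1⟩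
  · constructor
    · rintro q ⟨hq, hqv⟩
      exact ⟨htl.1 q hq, hqv⟩
    · rintro x ⟨hx, hxv⟩
      obtain ⟨y, hy, hyu⟩ := htl.2 x hx
      exact ⟨y, ⟨hy, hxv⟩, fun z hz => hyu z hz.1⟩
  · constructor
    · rintro q ⟨hq, hqv⟩
      exact ⟨hcl.1 q hq, hqv⟩
    · rintro x ⟨hx, hxv⟩
      obtain ⟨y, hy, hyu⟩ := hcl.2 x hx
      exact ⟨y, ⟨hy, hxv⟩, fun z hz => hyu z hz.1⟩

lemma nh_Cf {g : PreGraph V A L} (hg : IsGraph g) {u : V} (hu : u ∈ g.Cf) :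
    (g.Nh u).Cf = {u} := by
  apply Set.eq_singleton_iff_unique_mem.mpr
  refine ⟨⟨hu, mem_adjTo_self g u⟩, ?_⟩
  rintro v ⟨hv, hadj⟩
  rcases hadj with h | ⟨a, ha, h | h⟩
  · exact h
  · rcases hg.2.2.1 a v u h with ⟨hvTk, -⟩ | ⟨-, huTk⟩
    · exact ((Set.disjoint_left.mp hg.1 hvTk) hv).elim
    · exact ((Set.disjoint_left.mp hg.1 huTk) hu).elim
  · rcases hg.2.2.1 a u v h with ⟨huTk, -⟩ | ⟨-, hvTk⟩
    · exact ((Set.disjoint_left.mp hg.1 huTk) hu).elim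
    · exact ((Set.disjoint_left.mp hg.1 hvTk) hv).elim

lemma nh_Tk {g : PreGraph V A L} (hg : IsGraph g) {u : V} (hu : u ∈ g.Cf) :
    (g.Nh u).Tk = {v | ∃ a ∈ (g.Nh u).Arr,
      (a, (v, u)) ∈ (g.Nh u).inc ∨ (a, (u, v)) ∈ (g.Nh u).inc} := by
  ext v
  constructor
  · rintro ⟨hvTk, hadj⟩
    rcases hadj with h | ⟨a, ha, h | h⟩
    · cases h
      exact ((Set.disjoint_left.mp hg.1 hvTk) hu).elim
    · have hina : a ∈ g.incidentArrows u := ⟨ha, v, Or.inl h⟩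
      exact ⟨a, ⟨ha, hina⟩, Or.inl ⟨h, hina⟩⟩
    · have hina : a ∈ g.incidentArrows u := ⟨ha, v, Or.inr h⟩
      exact ⟨a, ⟨ha, hina⟩, Or.inr ⟨h, hina⟩⟩
  · rintro ⟨a, ⟨haArr, hina⟩, ⟨hq, -⟩ | ⟨hq, -⟩⟩
    · rcases hg.2.2.1 a v u hq with ⟨hvTk, -⟩ | ⟨-, huTk⟩
      · exact ⟨hvTk, mem_adjTo_of_inc_left haArr hq⟩
      · exact ((Set.disjoint_left.mp hg.1 huTk) hu).elim
    · rcases hg.2.2.1 a u v hq with ⟨huTk, -⟩ | ⟨-, hvTk⟩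
      · exact ((Set.disjoint_left.mp hg.1 huTk) hu).elim
      · exact ⟨hvTk, mem_adjTo_of_inc_right haArr hq⟩

lemma inArrowSeq_nh_iff {g : PreGraph V A L} {u : V} {ars : List A} :
    InArrowSeq (g.Nh u) u ars ↔ InArrowSeq g u ars := by
  constructor
  · rintro ⟨hnd, hmem, hidx⟩
    refine ⟨hnd, fun a => ?_, fun i a ha => ?_⟩
    · rw [hmem a]
      constructor
      · rintro ⟨⟨h1, -⟩, w, hw, -⟩
        exact ⟨h1, w, hw⟩
      · rintro ⟨h1, w, hw⟩
        have h2 : a ∈ g.incidentArrows u := ⟨h1, w, Or.inl hw⟩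
        exact ⟨⟨h1, h2⟩, w, hw, h2⟩
    · obtain ⟨h1, -⟩ := hidx i a ha
      exact h1
  · rintro ⟨hnd, hmem, hidx⟩
    have hina : ∀ a ∈ ars, a ∈ g.incidentArrows u := by
      intro a ha
      obtain ⟨h1, w, hw⟩ := (hmem a).mp ha
      exact ⟨h1, w, Or.inl hw⟩
    refine ⟨hnd, fun a => ?_, fun i a ha => ?_⟩
    · rw [hmem a]
      constructor
      · rintro ⟨h1, w, hw⟩
        have h2 : a ∈ g.incidentArrows u := ⟨h1, w, Or.inl hw⟩
        exact ⟨⟨h1, h2⟩, w, hw, h2⟩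
      · rintro ⟨⟨h1, -⟩, w, hw, -⟩
        exact ⟨h1, w, hw⟩
    · have hmem' : a ∈ ars := by
        obtain ⟨hl, rfl⟩ := List.getElem?_eq_some_iff.mp ha
        exact List.getElem_mem hl
      exact ⟨hidx i a ha, hina a hmem'⟩

lemma exists_getElem?' {α : Type*} {l : List α} {a : α} (h : a ∈ l) :
    ∃ i : ℕ, i < l.length ∧ l[i]? = some a := by
  obtain ⟨i, hi, rfl⟩ := List.mem_iff_getElem.mp h
  exact ⟨i, hi, List.getElem?_eq_some_iff.mpr ⟨hi, rfl⟩⟩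

end Aux

section Main

variable {V A L : Type*}

/-- The key local lemma: if every incidence pair of `U` (and every pair of such pairs) is
covered by some member of a family `Ps` of sub-construction-spaces whose structure graphs are
genuine structure graphs, then every configurator of `U` has a neighbourhood that is a
configuration. -/
lemma nh_config {U : CSpace V A L} (Ps : Set (CSpace V A L))
    (hg : IsGraph U.G) (hsigU : IsFunctionOn U.sig U.C)
    (hPs : ∀ P ∈ Ps, IsStructureGraph P.Ty P.le P.C P.sig P.G ∧ P.le ⊆ U.le ∧
      P.C ⊆ U.C ∧ P.sig ⊆ U.sig ∧ P.G.Subgraph U.G)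
    (u : V) (hu : u ∈ U.G.Cf)
    (hanchor : ∃ P ∈ Ps, u ∈ P.G.Cf)
    (hpair : ∀ q ∈ U.G.inc, ∀ q' ∈ U.G.inc, ∃ P ∈ Ps, q ∈ P.G.inc ∧ q' ∈ P.G.inc) :
    ∃ c ins out, (u, c) ∈ U.G.cl ∧ c ∈ U.C ∧ (c, (ins, out)) ∈ U.sig ∧
      IsConfiguration U.le (U.G.Nh u) u c ins out := by
  have hdisj := hg.1
  have hincf := hg.2.1
  have hiaf := hg.2.2.2.1
  have hclf := hg.2.2.2.2.2
  have hunotTk : ∀ P ∈ Ps, u ∉ P.G.Tk := fun P hP h =>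
    (Set.disjoint_left.mp hdisj ((hPs P hP).2.2.2.2.1 h)) hu
  have hucf' : ∀ P ∈ Ps, ∀ (a : A) (v w : V), (a, (v, w)) ∈ P.G.inc → (v = u ∨ w = u) →
      u ∈ P.G.Cf := by
    intro P hP a v w hq hvw
    have hgP : IsGraph P.G := (hPs P hP).1.1
    rcases hgP.2.2.1 a v w hq with ⟨hx1, hx2⟩ | ⟨hx1, hx2⟩ <;> rcases hvw with rfl | rfl
    · exact (hunotTk P hP hx1).elim
    · exact hx2
    · exact hx1
    · exact (hunotTk P hP hx2).elim
  obtain ⟨P0, hP0, huP0⟩ := hanchor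
  obtain ⟨c, ins, out, hcl0, hC0, hsig0, -⟩ := (hPs P0 hP0).1.2.2 u huP0
  have hclU : (u, c) ∈ U.G.cl := (hPs P0 hP0).2.2.2.2.2.2.2.2.2.2 hcl0
  have hCU : c ∈ U.C := (hPs P0 hP0).2.2.1 hC0
  have hsigUc : (c, (ins, out)) ∈ U.sig := (hPs P0 hP0).2.2.2.1 hsig0
  have master : ∀ P ∈ Ps, u ∈ P.G.Cf → IsConfiguration P.le (P.G.Nh u) u c ins out := by
    intro P hP huP
    obtain ⟨hsgP, hleP, hCP, hsigP, hsubP⟩ := hPs P hP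
    obtain ⟨c', ins', out', hcl', hC', hsig', hconf'⟩ := hsgP.2.2 u huP
    have hcc : c' = c := (hclf.2 u hu).unique (hsubP.2.2.2.2.2.2 hcl') hclU
    subst hcc
    have hio : (ins', out') = (ins, out) := (hsigU.2 c' hCU).unique (hsigP hsig') hsigUc
    have hi1 : ins' = ins := congrArg Prod.fst hio
    have hi2 : out' = out := congrArg Prod.snd hio
    subst hi1; subst hi2
    exact hconf'
  have lists : ∀ P ∈ Ps, u ∈ P.G.Cf → ∃ L2 : List A, InArrowSeq P.G u L2 ∧
      L2.length = ins.length ∧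
      ∀ (i : ℕ) (a : A) (τ : L), L2[i]? = some a → ins[i]? = some τ →
        ∃ w σ, (a, (w, u)) ∈ (P.G.Nh u).inc ∧ (w, σ) ∈ (P.G.Nh u).tl ∧ (σ, τ) ∈ P.le := by
    intro P hP huP
    obtain ⟨ars, hseq, hlen, hidx⟩ := (master P hP huP).2.2.2.2.2.2
    exact ⟨ars, inArrowSeq_nh_iff.mp hseq, hlen, hidx⟩
  have inList : ∀ P ∈ Ps, ∀ {L2 : List A}, InArrowSeq P.G u L2 → ∀ {a : A} {w : V},
      (a, (w, u)) ∈ P.G.inc → ∃ i, i < L2.length ∧ L2[i]? = some a ∧ (a, i + 1) ∈ U.G.ia := by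
    intro P hP L2 hseq a w hq
    have haP : a ∈ P.G.Arr := ((hPs P hP).1.1).2.1.1 _ hq
    have hmem : a ∈ L2 := (hseq.2.1 a).mpr ⟨haP, w, hq⟩
    obtain ⟨i, hi, hia⟩ := exists_getElem?' hmem
    exact ⟨i, hi, hia, (hPs P hP).2.2.2.2.2.2.2.2.1 (hseq.2.2 i a hia)⟩
  have idx_unique : ∀ (a : A) (k k' : ℕ), a ∈ U.G.Arr → (a, k) ∈ U.G.ia →
      (a, k') ∈ U.G.ia → k = k' :=
    fun a k k' ha hx hy => (hiaf.2 a ha).unique hx hy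
  have sub1 : ∀ (a : A) (w : V), (a, (w, u)) ∈ U.G.inc →
      ∃ i, i < ins.length ∧ (a, i + 1) ∈ U.G.ia := by
    intro a w hq
    obtain ⟨P, hP, hqP, -⟩ := hpair _ hq _ hq
    have huP : u ∈ P.G.Cf := hucf' P hP a w u hqP (Or.inr rfl)
    obtain ⟨L2, hseq, hlen, -⟩ := lists P hP huP
    obtain ⟨i, hi, -, hia⟩ := inList P hP hseq hqP
    exact ⟨i, hlen ▸ hi, hia⟩
  have sub3 : ∀ (a b : A) (w w' : V) (k : ℕ), (a, (w, u)) ∈ U.G.inc →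
      (b, (w', u)) ∈ U.G.inc → (a, k) ∈ U.G.ia → (b, k) ∈ U.G.ia → a = b := by
    intro a b w w' k hqa hqb hka hkb
    obtain ⟨P, hP, hqaP, hqbP⟩ := hpair _ hqa _ hqb
    have huP : u ∈ P.G.Cf := hucf' P hP a w u hqaP (Or.inr rfl)
    obtain ⟨L2, hseq, -, -⟩ := lists P hP huP
    obtain ⟨i, -, hgi, hiaA⟩ := inList P hP hseq hqaP
    obtain ⟨j, -, hgj, hiaB⟩ := inList P hP hseq hqbP
    have hk1 : k = i + 1 := idx_unique a k (i + 1) (hincf.1 _ hqa) hka hiaA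
    have hk2 : k = j + 1 := idx_unique b k (j + 1) (hincf.1 _ hqb) hkb hiaB
    have hij : j = i := by omega
    rw [hij] at hgj
    exact Option.some.inj (hgi.symm.trans hgj)
  have sub2 : ∀ i : ℕ, i < ins.length → ∃ a w, (a, (w, u)) ∈ U.G.inc ∧ (a, i + 1) ∈ U.G.ia := by
    intro i hi
    obtain ⟨L0, hseq0, hlen0, -⟩ := lists P0 hP0 huP0
    have hi' : i < L0.length := by omega
    have hgi : L0[i]? = some L0[i] := List.getElem?_eq_some_iff.mpr ⟨hi', rfl⟩
    have hmem : L0[i] ∈ L0 := List.getElem_mem hi'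
    obtain ⟨haArr, w, hw⟩ := (hseq0.2.1 _).mp hmem
    exact ⟨L0[i], w, (hPs P0 hP0).2.2.2.2.2.2.2.1 hw,
      (hPs P0 hP0).2.2.2.2.2.2.2.2.1 (hseq0.2.2 i _ hgi)⟩
  choose F W hF1 hF2 using sub2
  set Ff : Fin ins.length → A := fun i => F i i.isLt with hFf
  have hFinj : Function.Injective Ff := by
    intro i j hij
    have hai : (Ff i, (i : ℕ) + 1) ∈ U.G.ia := hF2 i i.isLt
    have haj : (Ff i, (j : ℕ) + 1) ∈ U.G.ia := by rw [hij]; exact hF2 j j.isLt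
    have haArr : Ff i ∈ U.G.Arr := hincf.1 _ (hF1 i i.isLt)
    have := idx_unique (Ff i) _ _ haArr hai haj
    exact Fin.ext (by omega)
  have harsget' : ∀ (i : ℕ) (a : A), (List.ofFn Ff)[i]? = some a →
      ∃ hi : i < ins.length, a = Ff ⟨i, hi⟩ := by
    intro i a ha
    obtain ⟨hl, rfl⟩ := List.getElem?_eq_some_iff.mp ha
    have hi : i < ins.length := by simpa using hl
    exact ⟨hi, by simp⟩
  have harsmem : ∀ a : A, a ∈ List.ofFn Ff ↔ a ∈ U.G.Arr ∧ ∃ w, (a, (w, u)) ∈ U.G.inc := by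
    intro a
    rw [List.mem_ofFn]
    constructor
    · rintro ⟨i, rfl⟩
      exact ⟨hincf.1 _ (hF1 i i.isLt), W i i.isLt, hF1 i i.isLt⟩
    · rintro ⟨haArr, w, hw⟩
      obtain ⟨i, hi, hia⟩ := sub1 a w hw
      exact ⟨⟨i, hi⟩, (sub3 a (Ff ⟨i, hi⟩) w (W i hi) (i + 1) hw (hF1 i hi) hia
        (hF2 i hi)).symm⟩
  have harseq : InArrowSeq U.G u (List.ofFn Ff) := by
    refine ⟨?_, harsmem, ?_⟩
    · rw [List.nodup_ofFn]
      exact hFinj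
    · intro i a ha
      obtain ⟨hi, rfl⟩ := harsget' i a ha
      exact hF2 i hi
  have hout : ∃! a0 : A, a0 ∈ (U.G.Nh u).Arr ∧ ∃ w, (a0, (u, w)) ∈ (U.G.Nh u).inc := by
    obtain ⟨a0, ⟨hNhArr0, w0, hNhInc0⟩, -⟩ := (master P0 hP0 huP0).2.2.2.2.1
    obtain ⟨ha0P, -⟩ := hNhArr0
    obtain ⟨hq0P, -⟩ := hNhInc0
    have hq0U : (a0, (u, w0)) ∈ U.G.inc := (hPs P0 hP0).2.2.2.2.2.2.2.1 hq0P
    have ha0U : a0 ∈ U.G.Arr := hincf.1 _ hq0U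
    have hincid : a0 ∈ U.G.incidentArrows u := ⟨ha0U, w0, Or.inr hq0U⟩
    refine ⟨a0, ⟨⟨ha0U, hincid⟩, w0, hq0U, hincid⟩, ?_⟩
    rintro b ⟨⟨hbU, -⟩, wb, hqbU, -⟩
    obtain ⟨P, hP, hqbP, hq0P'⟩ := hpair _ hqbU _ hq0U
    have huP : u ∈ P.G.Cf := hucf' P hP b u wb hqbP (Or.inl rfl)
    have hgP : IsGraph P.G := (hPs P hP).1.1
    have hbP : b ∈ P.G.Arr := hgP.2.1.1 _ hqbP
    have ha0P' : a0 ∈ P.G.Arr := hgP.2.1.1 _ hq0P'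
    have hincb : b ∈ P.G.incidentArrows u := ⟨hbP, wb, Or.inr hqbP⟩
    have hinca : a0 ∈ P.G.incidentArrows u := ⟨ha0P', w0, Or.inr hq0P'⟩
    exact (master P hP huP).2.2.2.2.1.unique ⟨⟨hbP, hincb⟩, wb, hqbP, hincb⟩
      ⟨⟨ha0P', hinca⟩, w0, hq0P', hinca⟩
  have hclause6 : ∀ a0 ∈ (U.G.Nh u).Arr, ∀ w : V, (a0, (u, w)) ∈ (U.G.Nh u).inc →
      (a0, 0) ∈ (U.G.Nh u).ia ∧ ∃ σ, (w, σ) ∈ (U.G.Nh u).tl ∧ (σ, out) ∈ U.le := by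
    rintro a0 ha0 w ⟨hqU, hinci⟩
    obtain ⟨P, hP, hqP, -⟩ := hpair _ hqU _ hqU
    have huP : u ∈ P.G.Cf := hucf' P hP a0 u w hqP (Or.inl rfl)
    obtain ⟨hsgP, hleP, -, -, hsubP⟩ := hPs P hP
    have haP : a0 ∈ P.G.Arr := hsgP.1.2.1.1 _ hqP
    have hincP : a0 ∈ P.G.incidentArrows u := ⟨haP, w, Or.inr hqP⟩
    obtain ⟨hia0, σ, htlσ, hleσ⟩ :=
      (master P hP huP).2.2.2.2.2.1 a0 ⟨haP, hincP⟩ w ⟨hqP, hincP⟩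
    obtain ⟨hia0g, -⟩ := hia0
    obtain ⟨htlg, -⟩ := htlσ
    refine ⟨⟨hsubP.2.2.2.2.1 hia0g, hinci⟩, σ, ⟨hsubP.2.2.2.2.2.1 htlg, ?_⟩, hleP hleσ⟩
    exact mem_adjTo_of_inc_right (hincf.1 _ hqU) hqU
  have hclause7 : ∀ (i : ℕ) (a : A) (τ : L), (List.ofFn Ff)[i]? = some a →
      ins[i]? = some τ →
      ∃ w σ, (a, (w, u)) ∈ (U.G.Nh u).inc ∧ (w, σ) ∈ (U.G.Nh u).tl ∧ (σ, τ) ∈ U.le := by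
    intro i a τ hgeti hinsi
    obtain ⟨hi, rfl⟩ := harsget' i a hgeti
    have hqU := hF1 i hi
    obtain ⟨P, hP, hqP, -⟩ := hpair _ hqU _ hqU
    have huP : u ∈ P.G.Cf := hucf' P hP _ _ u hqP (Or.inr rfl)
    obtain ⟨L2, hseq, hlen, hidx⟩ := lists P hP huP
    obtain ⟨j, hj, hgj, hjia⟩ := inList P hP hseq hqP
    have haArr : Ff ⟨i, hi⟩ ∈ U.G.Arr := hincf.1 _ hqU
    have hji : i + 1 = j + 1 := idx_unique _ _ _ haArr (hF2 i hi) hjia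
    have hij : j = i := by omega
    rw [hij] at hgj
    obtain ⟨w, σ, hq', htl', hle'⟩ := hidx i _ τ hgj hinsi
    obtain ⟨hqPg, -⟩ := hq'
    obtain ⟨htlg, hwadj⟩ := htl'
    obtain ⟨hsgP, hleP, -, -, hsubP⟩ := hPs P hP
    have hqU' : (Ff ⟨i, hi⟩, (w, u)) ∈ U.G.inc := hsubP.2.2.2.1 hqPg
    have haU' : Ff ⟨i, hi⟩ ∈ U.G.Arr := hincf.1 _ hqU'
    have hincid : Ff ⟨i, hi⟩ ∈ U.G.incidentArrows u := ⟨haU', w, Or.inl hqU'⟩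
    refine ⟨w, σ, ⟨hqU', hincid⟩, ⟨hsubP.2.2.2.2.2.1 htlg, ?_⟩, hleP hle'⟩
    exact mem_adjTo_of_inc_left haU' hqU'
  refine ⟨c, ins, out, hclU, hCU, hsigUc, isGraph_nh hg u, nh_Cf hg hu,
    ⟨hclU, mem_adjTo_self _ u⟩, nh_Tk hg hu, hout, hclause6,
    List.ofFn Ff, inArrowSeq_nh_iff.mpr harseq, by simp, hclause7⟩

end Main

section Union3

variable {V A L : Type*}

lemma subgraph_un12 (g h k : PreGraph V A L) : (g ∪ h).Subgraph ((g ∪ h) ∪ k) :=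
  ⟨Set.subset_union_left, Set.subset_union_left, Set.subset_union_left, Set.subset_union_left,
   Set.subset_union_left, Set.subset_union_left, Set.subset_union_left⟩

lemma subgraph_un13 (g h k : PreGraph V A L) : (g ∪ k).Subgraph ((g ∪ h) ∪ k) :=
  ⟨sub13', sub13', sub13', sub13', sub13', sub13', sub13'⟩

lemma subgraph_un23 (g h k : PreGraph V A L) : (h ∪ k).Subgraph ((g ∪ h) ∪ k) :=
  ⟨sub23', sub23', sub23', sub23', sub23', sub23', sub23'⟩

/-- The union of three pairwise compatible construction spaces is a construction space. -/
theorem isCSpace_union3 (Cs1 Cs2 Cs3 : CSpace V A L)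
    (h1 : IsCSpace Cs1) (h2 : IsCSpace Cs2) (h3 : IsCSpace Cs3)
    (h12 : IsCSpace (Cs1 ∪ Cs2)) (h13 : IsCSpace (Cs1 ∪ Cs3)) (h23 : IsCSpace (Cs2 ∪ Cs3)) :
    IsCSpace ((Cs1 ∪ Cs2) ∪ Cs3) := by
  have po12 := h12.1
  have po13 := h13.1
  have po23 := h23.1
  have sg1 := h1.2.2.2.2
  have sg2 := h2.2.2.2.2
  have sg3 := h3.2.2.2.2
  have g12 := h12.2.2.2.2.1
  have g13 := h13.2.2.2.2.1
  have g23 := h23.2.2.2.2.1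
  have hpo : IsPartialOrderOn ((Cs1 ∪ Cs2) ∪ Cs3).Ty ((Cs1 ∪ Cs2) ∪ Cs3).le := by
    refine ⟨?_, ?_, ?_, ?_⟩
    · rintro p (hp | hp)
      · obtain ⟨ha, hb⟩ := po12.1 p hp
        exact ⟨Or.inl ha, Or.inl hb⟩
      · obtain ⟨ha, hb⟩ := po13.1 p (Or.inr hp)
        exact ⟨sub13' ha, sub13' hb⟩
    · rintro τ ((hτ | hτ) | hτ)
      · exact Or.inl (po12.2.1 τ (Or.inl hτ))
      · exact Or.inl (po12.2.1 τ (Or.inr hτ))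
      · exact sub13' (po13.2.1 τ (Or.inr hτ))
    · intro a b hab hba
      rcases mem_pair_cases3 hab hba with ⟨ha, hb⟩ | ⟨ha, hb⟩ | ⟨ha, hb⟩
      · exact po12.2.2.1 a b ha hb
      · exact po13.2.2.1 a b ha hb
      · exact po23.2.2.1 a b ha hb
    · intro a b cc hab hbc
      rcases mem_pair_cases3 hab hbc with ⟨ha, hb⟩ | ⟨ha, hb⟩ | ⟨ha, hb⟩
      · exact Or.inl (po12.2.2.2 a b cc ha hb)
      · exact sub13' (po13.2.2.2 a b cc ha hb)
      · exact sub23' (po23.2.2.2 a b cc ha hb)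
  have hdisjCT : Disjoint ((Cs1 ∪ Cs2) ∪ Cs3).C ((Cs1 ∪ Cs2) ∪ Cs3).Ty := by
    have d12 := h12.2.1
    have d13 := h13.2.1
    have d23 := h23.2.1
    have e12 : Disjoint (Cs1.C ∪ Cs2.C) (Cs1.Ty ∪ Cs2.Ty) := d12
    have e13 : Disjoint (Cs1.C ∪ Cs3.C) (Cs1.Ty ∪ Cs3.Ty) := d13
    have e23 : Disjoint (Cs2.C ∪ Cs3.C) (Cs2.Ty ∪ Cs3.Ty) := d23
    show Disjoint ((Cs1.C ∪ Cs2.C) ∪ Cs3.C) ((Cs1.Ty ∪ Cs2.Ty) ∪ Cs3.Ty)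
    simp only [Set.disjoint_union_left, Set.disjoint_union_right] at e12 e13 e23 ⊢
    tauto
  have hfun : IsFunctionOn ((Cs1 ∪ Cs2) ∪ Cs3).sig ((Cs1 ∪ Cs2) ∪ Cs3).C :=
    isFunctionOn_union3 h12.2.2.1 h13.2.2.1 h23.2.2.1
  have hgU : IsGraph ((Cs1 ∪ Cs2) ∪ Cs3).G := by
    refine ⟨?_, ?_, ?_, ?_, ?_, ?_⟩
    · have d12 := g12.1
      have d13 := g13.1
      have d23 := g23.1
      have e12 : Disjoint (Cs1.G.Tk ∪ Cs2.G.Tk) (Cs1.G.Cf ∪ Cs2.G.Cf) := d12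
      have e13 : Disjoint (Cs1.G.Tk ∪ Cs3.G.Tk) (Cs1.G.Cf ∪ Cs3.G.Cf) := d13
      have e23 : Disjoint (Cs2.G.Tk ∪ Cs3.G.Tk) (Cs2.G.Cf ∪ Cs3.G.Cf) := d23
      show Disjoint ((Cs1.G.Tk ∪ Cs2.G.Tk) ∪ Cs3.G.Tk) ((Cs1.G.Cf ∪ Cs2.G.Cf) ∪ Cs3.G.Cf)
      simp only [Set.disjoint_union_left, Set.disjoint_union_right] at e12 e13 e23 ⊢
      tauto
    · exact isFunctionOn_union3 g12.2.1 g13.2.1 g23.2.1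
    · rintro a v w ((h | h) | h)
      · rcases sg1.1.2.2.1 a v w h with ⟨ha, hb⟩ | ⟨ha, hb⟩
        · exact Or.inl ⟨Or.inl (Or.inl ha), Or.inl (Or.inl hb)⟩
        · exact Or.inr ⟨Or.inl (Or.inl ha), Or.inl (Or.inl hb)⟩
      · rcases sg2.1.2.2.1 a v w h with ⟨ha, hb⟩ | ⟨ha, hb⟩
        · exact Or.inl ⟨Or.inl (Or.inr ha), Or.inl (Or.inr hb)⟩
        · exact Or.inr ⟨Or.inl (Or.inr ha), Or.inl (Or.inr hb)⟩
      · rcases sg3.1.2.2.1 a v w h with ⟨ha, hb⟩ | ⟨ha, hb⟩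
        · exact Or.inl ⟨Or.inr ha, Or.inr hb⟩
        · exact Or.inr ⟨Or.inr ha, Or.inr hb⟩
    · exact isFunctionOn_union3 g12.2.2.2.1 g13.2.2.2.1 g23.2.2.2.1
    · exact isFunctionOn_union3 g12.2.2.2.2.1 g13.2.2.2.2.1 g23.2.2.2.2.1
    · exact isFunctionOn_union3 g12.2.2.2.2.2 g13.2.2.2.2.2 g23.2.2.2.2.2
  refine ⟨hpo, hdisjCT, hfun, ?_, hgU, ?_, ?_⟩
  · rintro c ins out ((h | h) | h)
    · obtain ⟨hne, hty, hout⟩ := h1.2.2.2.1 c ins out h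
      exact ⟨hne, fun τ hτ => Or.inl (Or.inl (hty τ hτ)), Or.inl (Or.inl hout)⟩
    · obtain ⟨hne, hty, hout⟩ := h2.2.2.2.1 c ins out h
      exact ⟨hne, fun τ hτ => Or.inl (Or.inr (hty τ hτ)), Or.inl (Or.inr hout)⟩
    · obtain ⟨hne, hty, hout⟩ := h3.2.2.2.1 c ins out h
      exact ⟨hne, fun τ hτ => Or.inr (hty τ hτ), Or.inr hout⟩
  · rintro x τ ((h | h) | h)
    · exact Or.inl (Or.inl (sg1.2.1 x τ h))
    · exact Or.inl (Or.inr (sg2.2.1 x τ h))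
    · exact Or.inr (sg3.2.1 x τ h)
  · intro u hu
    apply nh_config (U := (Cs1 ∪ Cs2) ∪ Cs3) ({Cs1 ∪ Cs2, Cs1 ∪ Cs3, Cs2 ∪ Cs3}) hgU hfun
      ?_ u hu ?_ ?_
    · rintro P hP
      simp only [Set.mem_insert_iff, Set.mem_singleton_iff] at hP
      rcases hP with rfl | rfl | rfl
      · exact ⟨h12.2.2.2.2, Set.subset_union_left, Set.subset_union_left,
          Set.subset_union_left, subgraph_un12 _ _ _⟩
      · exact ⟨h13.2.2.2.2, sub13', sub13', sub13', subgraph_un13 _ _ _⟩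
      · exact ⟨h23.2.2.2.2, sub23', sub23', sub23', subgraph_un23 _ _ _⟩
    · rcases hu with (h | h) | h
      · exact ⟨Cs1 ∪ Cs2, by simp, Or.inl h⟩
      · exact ⟨Cs1 ∪ Cs2, by simp, Or.inr h⟩
      · exact ⟨Cs1 ∪ Cs3, by simp, Or.inr h⟩
    · rintro q ((hq | hq) | hq) q' ((hq' | hq') | hq')
      · exact ⟨Cs1 ∪ Cs2, by simp, Or.inl hq, Or.inl hq'⟩
      · exact ⟨Cs1 ∪ Cs2, by simp, Or.inl hq, Or.inr hq'⟩
      · exact ⟨Cs1 ∪ Cs3, by simp, Or.inl hq, Or.inr hq'⟩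
      · exact ⟨Cs1 ∪ Cs2, by simp, Or.inr hq, Or.inl hq'⟩
      · exact ⟨Cs1 ∪ Cs2, by simp, Or.inr hq, Or.inr hq'⟩
      · exact ⟨Cs2 ∪ Cs3, by simp, Or.inl hq, Or.inr hq'⟩
      · exact ⟨Cs1 ∪ Cs3, by simp, Or.inr hq, Or.inl hq'⟩
      · exact ⟨Cs2 ∪ Cs3, by simp, Or.inr hq, Or.inl hq'⟩
      · exact ⟨Cs2 ∪ Cs3, by simp, Or.inr hq, Or.inr hq'⟩

end Union3

/-- the universal space of a representational system is a construction space. -/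
theorem universal_space_is_cspace {V A L : Type*}
    (R : RSystem V A L) (Ty MTy : Set L) (le Mle : Set (L × L))
    (hR : IsRSystem R Ty le MTy Mle) :
    IsCSpace ((R.Gs ∪ R.Es) ∪ R.Is) := by
  obtain ⟨-, -, -, -, -, hGs, -, -, -, hEs, -, -, -, hIs, -, -, hGE, hGI, hEI, -, -, -⟩ := hR
  exact isCSpace_union3 R.Gs R.Es R.Is hGs hEs hIs hGE hGI hEI

end RST
end
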